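/- arXiv:0911.5418 — 8 statements merged into one kernel-verified Lean document; each statement's English description precedes it below -/
import Mathlib

section
/- Let L be a Lie algebra of minimal dimension among finite-dimensional Lie algebras over a field that can be written as a sum L = A + B of two nilpotent subalgebras but are not solvable. Then L has no nonzero solvable ideals (i.e., the solvable radical of L is zero). -/
/-- The quotient map onto the quotient by a Lie ideal, as a Lie algebra homomorphism. -/
def LieIdeal.quotLieHom {K : Type*} [Field K] {L : Type*} [LieRing L] [LieAlgebra K L]
    (I : LieIdeal K L) : L →ₗ⁅K⁆ L ⧸ I :=
  { (I : Submodule K L).mkQ with map_lie' := fun {_ _} => rfl }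


/-- A minimal-dimensional finite-dimensional Lie algebra that is a sum of two nilpotent
subalgebras but is not solvable has zero solvable radical, i.e. it is semisimple in the
sense that it has no nonzero solvable ideals. -/
theorem minimal_counterexample_radical_eq_bot
    (K : Type*) [Field K]
    (L : Type u) [LieRing L] [LieAlgebra K L] [FiniteDimensional K L]
    (A B : LieSubalgebra K L)
    (hA : LieRing.IsNilpotent A) (hB : LieRing.IsNilpotent B)
    (hsum : ∀ x : L, ∃ a ∈ A, ∃ b ∈ B, x = a + b)
    (hns : ¬ LieAlgebra.IsSolvable L)
    (hmin : ∀ (L' : Type u) [LieRing L'] [LieAlgebra K L'] [FiniteDimensional K L'],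
      Module.finrank K L' < Module.finrank K L →
      ∀ A' B' : LieSubalgebra K L', LieRing.IsNilpotent A' →
        LieRing.IsNilpotent B' →
        (∀ x : L', ∃ a ∈ A', ∃ b ∈ B', x = a + b) →
        LieAlgebra.IsSolvable L') :
    LieAlgebra.radical K L = ⊥ := by
  by_contra hrad
  set I := LieAlgebra.radical K L with hIdef
  set π := I.quotLieHom with hπdef
  have hπsurj : Function.Surjective π := Submodule.mkQ_surjective _
  have hker : π.ker = I := by
    ext x
    rw [LieHom.mem_ker]
    show (I : Submodule K L).mkQ x = 0 ↔ _
    rw [Submodule.mkQ_apply, Submodule.Quotient.mk_eq_zero]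
    exact Iff.rfl
  -- dimension drop
  have hlt : Module.finrank K (L ⧸ I) < Module.finrank K L := by
    have h1 := Submodule.finrank_quotient_add_finrank (I : Submodule K L)
    have h2 : Module.finrank K (L ⧸ I) = Module.finrank K (L ⧸ (I : Submodule K L)) := rfl
    rw [h2]
    have hpos : 0 < Module.finrank K (I : Submodule K L) := by
      rw [Module.finrank_pos_iff]
      rw [Submodule.nontrivial_iff_ne_bot]
      intro hbot
      apply hrad
      rw [eq_bot_iff]
      intro x hx
      have hx0 : x ∈ (⊥ : Submodule K L) := by rw [← hbot]; exact hx
      simpa using hx0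
    omega
  -- nilpotent images
  have himg : ∀ C : LieSubalgebra K L, LieRing.IsNilpotent C →
      LieRing.IsNilpotent (C.map π) := by
    intro C hC
    have heq : (π.comp C.incl).range = C.map π := by
      ext x
      simp [LieHom.mem_range, LieSubalgebra.mem_map]
    rw [← heq]
    exact (π.comp C.incl).surjective_rangeRestrict.lieAlgebra_isNilpotent
  have hsum' : ∀ x : L ⧸ I, ∃ a ∈ A.map π, ∃ b ∈ B.map π, x = a + b := by
    intro x
    obtain ⟨y, rfl⟩ := hπsurj x
    obtain ⟨a, ha, b, hb, rfl⟩ := hsum y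
    exact ⟨π a, ⟨a, ha, rfl⟩, π b, ⟨b, hb, rfl⟩, (π.map_add a b).symm⟩
  have hsolv : LieAlgebra.IsSolvable (L ⧸ I) :=
    hmin (L ⧸ I) hlt (A.map π) (B.map π) (himg A hA) (himg B hB) hsum'
  obtain ⟨k, hk⟩ := LieAlgebra.IsSolvable.solvable K (L ⧸ I)
  have hle : LieAlgebra.derivedSeries K L k ≤ I := by
    have hmap : (LieAlgebra.derivedSeries K L k).map π = ⊥ := by
      rw [LieIdeal.derivedSeries_map_eq k hπsurj, hk]
    rw [LieIdeal.map_eq_bot_iff, hker] at hmap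
    exact hmap
  have : LieAlgebra.IsSolvable I := LieAlgebra.radicalIsSolvable K L
  obtain ⟨l, hl⟩ := LieAlgebra.IsSolvable.solvable K I
  have hl' : LieAlgebra.derivedSeriesOfIdeal K L l I = ⊥ :=
    (I.derivedSeries_eq_bot_iff l).mp hl
  apply hns
  refine LieAlgebra.IsSolvable.mk (R := K) (k := l + k) ?_
  rw [LieAlgebra.derivedSeries_def, LieAlgebra.derivedSeriesOfIdeal_add]
  exact le_bot_iff.mp (hl' ▸ LieAlgebra.derivedSeriesOfIdeal_mono hle l)
end

section
/- Let L be a minimal-dimensional counterexample to the statement 'a sum of two nilpotent subalgebras is solvable', with decomposition L = A + B into nilpotent subalgebras. If L₀ is a proper Lie subalgebra of L containing A, then L₀ is solvable. -/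
/-- In a minimal-dimensional counterexample `L = A + B` (sum of two nilpotent subalgebras,
`L` not solvable), every proper subalgebra containing `A` is solvable. -/
theorem minimal_counterexample_proper_subalgebra_containing_A_solvable
    (K : Type*) [Field K]
    (L : Type u) [LieRing L] [LieAlgebra K L] [FiniteDimensional K L]
    (A B : LieSubalgebra K L)
    (hA : LieModule.IsNilpotent A A) (hB : LieModule.IsNilpotent B B)
    (hsum : ∀ x : L, ∃ a ∈ A, ∃ b ∈ B, x = a + b)
    (hns : ¬ LieAlgebra.IsSolvable L)
    (hmin : ∀ (L' : Type u) [LieRing L'] [LieAlgebra K L'] [FiniteDimensional K L'],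
      Module.finrank K L' < Module.finrank K L →
      ∀ A' B' : LieSubalgebra K L', LieModule.IsNilpotent A' A' →
        LieModule.IsNilpotent B' B' →
        (∀ x : L', ∃ a ∈ A', ∃ b ∈ B', x = a + b) →
        LieAlgebra.IsSolvable L')
    (L₀ : LieSubalgebra K L) (hAL₀ : A ≤ L₀) (hproper : L₀ ≠ ⊤) :
    LieAlgebra.IsSolvable L₀ := by
  -- Subalgebras of L₀ corresponding to A and B ∩ L₀.
  set A' : LieSubalgebra K L₀ := A.comap L₀.incl with hA'
  set B' : LieSubalgebra K L₀ := B.comap L₀.incl with hB'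
  -- Embeddings into A and B.
  have hnilA' : LieModule.IsNilpotent A' A' := by
    exact Function.Injective.lieAlgebra_isNilpotent (R := K) (h₁ := hA)
      (f := { toFun := fun x : A' => (⟨(x : L₀), x.2⟩ : A)
              map_add' := fun x y => rfl
              map_smul' := fun c x => rfl
              map_lie' := fun {x y} => rfl })
      (by intro x y h; apply Subtype.ext; apply Subtype.ext; have h2 := Subtype.ext_iff.mp h; exact h2)
  have hnilB' : LieModule.IsNilpotent B' B' := by
    exact Function.Injective.lieAlgebra_isNilpotent (R := K) (h₁ := hB)
      (f := { toFun := fun x : B' => (⟨(x : L₀), x.2⟩ : B)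
              map_add' := fun x y => rfl
              map_smul' := fun c x => rfl
              map_lie' := fun {x y} => rfl })
      (by intro x y h; apply Subtype.ext; apply Subtype.ext; have h2 := Subtype.ext_iff.mp h; exact h2)
  -- L₀ = A' + B'.
  have hsum' : ∀ x : L₀, ∃ a ∈ A', ∃ b ∈ B', x = a + b := by
    intro x
    obtain ⟨a, ha, b, hb, hx⟩ := hsum (x : L)
    have haL₀ : a ∈ L₀ := hAL₀ ha
    have hbL₀ : b ∈ L₀ := by
      have : b = (x : L) - a := by rw [hx]; abel
      rw [this]
      exact L₀.sub_mem x.2 haL₀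
    refine ⟨⟨a, haL₀⟩, ha, ⟨b, hbL₀⟩, hb, ?_⟩
    ext
    exact hx
  -- dimension drops
  have hlt : Module.finrank K L₀ < Module.finrank K L := by
    have : L₀.toSubmodule ≠ ⊤ := by
      intro h
      apply hproper
      rw [← LieSubalgebra.toSubmodule_inj] at *
      simpa using h
    exact Submodule.finrank_lt this
  exact hmin L₀ hlt A' B' hnilA' hnilB' hsum'
end

section
/- Let K be a field of characteristic p > 0 and O₁ = K[x]/(x^p) the truncated polynomial algebra in one variable. Every Lie subalgebra D of Der(O₁) consisting of nilpotent derivations and such that O₁ contains no nonzero proper D-invariant ideal has dimension at most 1; in particular dim D < p. -/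
/-- The ideal `(x₁^p, …, xₘ^p)` of the polynomial algebra. -/
noncomputable def truncationIdeal (K : Type*) [CommRing K] (m p : ℕ) : Ideal (MvPolynomial (Fin m) K) :=
  Ideal.span (Set.range fun i => (MvPolynomial.X i : MvPolynomial (Fin m) K) ^ p)

/-- The truncated polynomial algebra `Oₘ = K[x₁,…,xₘ]/(x₁^p,…,xₘ^p)`. -/
abbrev TruncPoly (K : Type*) [CommRing K] (m p : ℕ) : Type _ :=
  MvPolynomial (Fin m) K ⧸ truncationIdeal K m p

namespace TruncAux

open MvPolynomial Polynomial

variable (K : Type*) [Field K] (p : ℕ)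

noncomputable def polyEquiv : MvPolynomial (Fin 1) K ≃ₐ[K] Polynomial K :=
  (MvPolynomial.finSuccEquiv K 0).trans
    (Polynomial.mapAlgEquiv (MvPolynomial.isEmptyAlgEquiv K (Fin 0)))

lemma polyEquiv_X : polyEquiv K (MvPolynomial.X 0) = Polynomial.X := by
  simp [polyEquiv, MvPolynomial.finSuccEquiv_X_zero]

lemma truncationIdeal_eq :
    truncationIdeal K 1 p =
      Ideal.span {(MvPolynomial.X 0 : MvPolynomial (Fin 1) K) ^ p} := by
  unfold truncationIdeal
  congr 1
  rw [Set.range_unique]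
  rfl

noncomputable def truncEquiv :
    TruncPoly K 1 p ≃ₐ[K] AdjoinRoot ((Polynomial.X : Polynomial K) ^ p) :=
  Ideal.quotientEquivAlg (truncationIdeal K 1 p)
    (Ideal.span {(Polynomial.X : Polynomial K) ^ p}) (polyEquiv K)
    (by rw [truncationIdeal_eq, Ideal.map_span, Set.image_singleton]; simp [polyEquiv_X])

/-- The image of `x` in the truncated polynomial algebra. -/
noncomputable def tg : TruncPoly K 1 p := Ideal.Quotient.mk _ (MvPolynomial.X 0)

lemma truncEquiv_tg : truncEquiv K p (tg K p) = AdjoinRoot.root _ := by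
  rw [tg, truncEquiv]
  show Ideal.Quotient.mk _ (polyEquiv K (MvPolynomial.X 0)) = _
  rw [polyEquiv_X]
  rfl

noncomputable def tBasis : Module.Basis (Fin p) K (TruncPoly K 1 p) :=
  (((AdjoinRoot.powerBasis' (monic_X_pow (R := K) p)).basis).map
    (truncEquiv K p).symm.toLinearEquiv).reindex (finCongr (by simp))

lemma tBasis_apply (i : Fin p) : tBasis K p i = tg K p ^ (i : ℕ) := by
  rw [tBasis, Module.Basis.reindex_apply, Module.Basis.map_apply, PowerBasis.basis_eq_pow]
  simp only [AdjoinRoot.powerBasis'_gen, finCongr_symm, finCongr_apply, Fin.coe_cast]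
  rw [← truncEquiv_tg, ← map_pow]
  rw [AlgEquiv.toLinearEquiv_apply]
  exact (truncEquiv K p).symm_apply_apply _

end TruncAux

namespace TruncAux
open MvPolynomial Polynomial
variable (K : Type*) [Field K] (p : ℕ)

lemma tg_pow_p : tg K p ^ p = 0 := by
  rw [tg, ← map_pow, Ideal.Quotient.eq_zero_iff_mem]
  exact Ideal.subset_span ⟨0, rfl⟩

lemma tg_pow_of_le {m : ℕ} (h : p ≤ m) : tg K p ^ m = 0 := by
  rw [← Nat.add_sub_cancel' h, pow_add, tg_pow_p, zero_mul]

lemma nontrivialT (hp0 : 0 < p) : Nontrivial (TruncPoly K 1 p) :=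
  nontrivial_of_ne _ 0 ((tBasis K p).ne_zero ⟨0, hp0⟩)

noncomputable def cf (n : ℕ) : TruncPoly K 1 p →ₗ[K] K :=
  if h : n < p then (tBasis K p).coord ⟨n, h⟩ else 0

lemma cf_apply_lt {n : ℕ} (h : n < p) (a : TruncPoly K 1 p) :
    cf K p n a = (tBasis K p).repr a ⟨n, h⟩ := by
  rw [cf, dif_pos h]; rfl

lemma cf_apply_ge {n : ℕ} (h : p ≤ n) (a : TruncPoly K 1 p) : cf K p n a = 0 := by
  rw [cf, dif_neg (not_lt.2 h)]; rfl

lemma cf_tpow (n m : ℕ) :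
    cf K p n (tg K p ^ m) = if n = m ∧ m < p then 1 else 0 := by
  by_cases hm : m < p
  · by_cases hn : n < p
    · rw [cf_apply_lt K p hn, ← tBasis_apply K p ⟨m, hm⟩, (tBasis K p).repr_self_apply]
      simp only [Fin.mk.injEq, hm, and_true]
      exact if_congr eq_comm rfl rfl
    · rw [cf_apply_ge K p (not_lt.1 hn), if_neg (by omega)]
  · rw [tg_pow_of_le K p (not_lt.1 hm), map_zero, if_neg (by tauto)]

lemma sum_repr (a : TruncPoly K 1 p) :
    ∑ i : Fin p, cf K p i a • tg K p ^ (i : ℕ) = a := by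
  conv_rhs => rw [← (tBasis K p).sum_repr a]
  refine Finset.sum_congr rfl fun i _ => ?_
  rw [cf_apply_lt K p i.isLt, tBasis_apply]

lemma eq_zero_of_cf (a : TruncPoly K 1 p) (h : ∀ n, cf K p n a = 0) : a = 0 := by
  rw [← sum_repr K p a]
  simp [h]

lemma mul_expand (a b : TruncPoly K 1 p) :
    a * b = ∑ i : Fin p, ∑ j : Fin p,
      (cf K p i a * cf K p j b) • tg K p ^ ((i : ℕ) + (j : ℕ)) := by
  conv_lhs => rw [← sum_repr K p a, ← sum_repr K p b]
  rw [Finset.sum_mul_sum]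
  refine Finset.sum_congr rfl fun i _ => Finset.sum_congr rfl fun j _ => ?_
  rw [smul_mul_smul_comm, pow_add]

lemma cf_mul_vanish (a b : TruncPoly K 1 p) (k l : ℕ)
    (ha : ∀ i < k, cf K p i a = 0) (hb : ∀ j < l, cf K p j b = 0) :
    ∀ m < k + l, cf K p m (a * b) = 0 := by
  intro m hm
  rw [mul_expand, map_sum]
  refine Finset.sum_eq_zero fun i _ => ?_
  rw [map_sum]
  refine Finset.sum_eq_zero fun j _ => ?_
  rw [map_smul, smul_eq_mul, cf_tpow]
  rcases lt_or_ge (i : ℕ) k with hik | hik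
  · rw [ha i hik, zero_mul, zero_mul]
  rcases lt_or_ge (j : ℕ) l with hjl | hjl
  · rw [hb j hjl, mul_zero, zero_mul]
  rw [if_neg (by omega), mul_zero]

lemma cf_mul_top (a b : TruncPoly K 1 p) (k l : ℕ) (hkl : k + l < p)
    (ha : ∀ i < k, cf K p i a = 0) (hb : ∀ j < l, cf K p j b = 0) :
    cf K p (k + l) (a * b) = cf K p k a * cf K p l b := by
  have hk : k < p := by omega
  have hl : l < p := by omega
  rw [mul_expand, map_sum]
  rw [Finset.sum_eq_single (⟨k, hk⟩ : Fin p)]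
  · rw [map_sum, Finset.sum_eq_single (⟨l, hl⟩ : Fin p)]
    · rw [map_smul, smul_eq_mul, cf_tpow, if_pos ⟨rfl, hkl⟩, mul_one]
    · intro j _ hj
      rw [map_smul, smul_eq_mul, cf_tpow]
      rcases lt_or_ge (j : ℕ) l with hjl | hjl
      · rw [hb j hjl, mul_zero, zero_mul]
      · have : (j : ℕ) ≠ l := fun h => hj (Fin.ext h)
        rw [if_neg (by simp only [Fin.val_mk]; omega), mul_zero]
    · intro h; exact absurd (Finset.mem_univ _) h
  · intro i _ hi
    rw [map_sum]
    refine Finset.sum_eq_zero fun j _ => ?_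
    rw [map_smul, smul_eq_mul, cf_tpow]
    rcases lt_or_ge (i : ℕ) k with hik | hik
    · rw [ha i hik, zero_mul, zero_mul]
    rcases lt_or_ge (j : ℕ) l with hjl | hjl
    · rw [hb j hjl, mul_zero, zero_mul]
    have : (i : ℕ) ≠ k := fun h => hi (Fin.ext h)
    rw [if_neg (by omega), mul_zero]
  · intro h; exact absurd (Finset.mem_univ _) h

end TruncAux

namespace TruncAux
open MvPolynomial Polynomial
variable (K : Type*) [Field K] (p : ℕ)

noncomputable def Dx : TruncPoly K 1 p →ₗ[K] TruncPoly K 1 p :=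
  (tBasis K p).constr K fun i => ((i : ℕ) : K) • tg K p ^ ((i : ℕ) - 1)

lemma Dx_tpow [CharP K p] (m : ℕ) :
    Dx K p (tg K p ^ m) = ((m : ℕ) : K) • tg K p ^ (m - 1) := by
  rcases lt_or_ge m p with hm | hm
  · rw [← tBasis_apply K p ⟨m, hm⟩, Dx, (tBasis K p).constr_basis]
  · rw [tg_pow_of_le K p hm, map_zero]
    rcases eq_or_lt_of_le hm with he | hlt
    · rw [← he, CharP.cast_eq_zero K p, zero_smul]
    · rw [tg_pow_of_le K p (by omega), smul_zero]

lemma Dx_leibniz [CharP K p] (a b : TruncPoly K 1 p) :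
    Dx K p (a * b) = a * Dx K p b + b * Dx K p a := by
  have key : ∀ i j : ℕ, Dx K p (tg K p ^ i * tg K p ^ j)
      = tg K p ^ i * Dx K p (tg K p ^ j) + tg K p ^ j * Dx K p (tg K p ^ i) := by
    intro i j
    rw [← pow_add, Dx_tpow K p, Dx_tpow K p, Dx_tpow K p]
    rcases Nat.eq_zero_or_pos i with hi | hi
    · subst hi; simp
    rcases Nat.eq_zero_or_pos j with hj | hj
    · subst hj; simp
    rw [mul_smul_comm, mul_smul_comm, ← pow_add, ← pow_add,
      show i + (j - 1) = i + j - 1 by omega, show j + (i - 1) = i + j - 1 by omega,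
      ← add_smul]
    congr 1
    have : i + j = j + i := by omega
    rw [this, Nat.cast_add]
  suffices h : (LinearMap.mul K (TruncPoly K 1 p)).compr₂ (Dx K p)
      = (LinearMap.mul K (TruncPoly K 1 p)).compl₂ (Dx K p)
        + ((LinearMap.mul K (TruncPoly K 1 p)).compl₂ (Dx K p)).flip by
    have h2 := LinearMap.congr_fun (LinearMap.congr_fun h a) b
    simpa using h2
  refine (tBasis K p).ext fun i => ?_
  refine (tBasis K p).ext fun j => ?_
  simp only [LinearMap.compr₂_apply, LinearMap.compl₂_apply, LinearMap.add_apply,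
    LinearMap.flip_apply, LinearMap.mul_apply']
  rw [tBasis_apply, tBasis_apply]
  exact key i j

lemma adjoin_tg : Algebra.adjoin K {tg K p} = ⊤ := by
  have h2 := AlgHom.map_adjoin (Ideal.Quotient.mkₐ K (truncationIdeal K 1 p))
    (Set.range (X : Fin 1 → MvPolynomial (Fin 1) K))
  rw [MvPolynomial.adjoin_range_X, Algebra.map_top,
    (AlgHom.range_eq_top _).2 (Ideal.Quotient.mkₐ_surjective K _)] at h2
  rw [Set.range_unique] at h2
  rw [Set.image_singleton] at h2
  exact h2.symm

lemma derivation_apply [CharP K p] (hp1 : 1 < p)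
    (d : Derivation K (TruncPoly K 1 p) (TruncPoly K 1 p)) (a : TruncPoly K 1 p) :
    d a = Dx K p a * d (tg K p) := by
  have ha : a ∈ Algebra.adjoin K {tg K p} := by rw [adjoin_tg]; trivial
  induction ha using Algebra.adjoin_induction with
  | mem x hx =>
      rcases hx with rfl
      have : Dx K p (tg K p) = 1 := by
        rw [show tg K p = tg K p ^ 1 from (pow_one _).symm, Dx_tpow K p]
        simp
      rw [this, one_mul]
  | algebraMap r =>
      rw [Derivation.map_algebraMap, Algebra.algebraMap_eq_smul_one, map_smul,
        show (1 : TruncPoly K 1 p) = tg K p ^ 0 from (pow_zero _).symm, Dx_tpow K p]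
      simp
  | add x y hx hy ihx ihy => rw [Derivation.map_add, map_add, ihx, ihy, add_mul]
  | mul x y hx hy ihx ihy =>
      rw [Derivation.leibniz, Dx_leibniz K p, smul_eq_mul, smul_eq_mul, ihx, ihy, add_mul]
      ring

lemma cf_Dx [CharP K p] (n : ℕ) (a : TruncPoly K 1 p) :
    cf K p n (Dx K p a) = ((n + 1 : ℕ) : K) * cf K p (n + 1) a := by
  conv_lhs => rw [← sum_repr K p a, map_sum, map_sum]
  simp only [map_smul, Dx_tpow K p, smul_eq_mul, map_smul]
  rcases lt_or_ge (n + 1) p with h | h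
  · rw [Finset.sum_eq_single (⟨n + 1, h⟩ : Fin p)]
    · rw [cf_tpow, if_pos (by refine ⟨by simp only [Fin.val_mk]; omega, by simp only [Fin.val_mk]; omega⟩)]
      ring
    · intro j _ hj
      rcases Nat.eq_zero_or_pos (j : ℕ) with hj0 | hj0
      · rw [hj0]; simp
      · rw [cf_tpow, if_neg, mul_zero, mul_zero]
        rintro ⟨h1, -⟩
        exact hj (Fin.ext (by simp only [Fin.val_mk]; omega))
    · intro h; exact absurd (Finset.mem_univ _) h
  · rw [cf_apply_ge K p (by omega), mul_zero]
    refine Finset.sum_eq_zero fun i _ => ?_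
    rcases Nat.eq_zero_or_pos (i : ℕ) with hi0 | hi0
    · rw [hi0]; simp
    · rw [cf_tpow, if_neg, mul_zero, mul_zero]
      rintro ⟨h1, -⟩
      have := i.isLt
      omega

end TruncAux


namespace TruncAux
open MvPolynomial Polynomial
variable (K : Type*) [Field K] (p : ℕ)

lemma dvd_of_cf0 (z : TruncPoly K 1 p) (h : cf K p 0 z = 0) : tg K p ∣ z := by
  rw [← sum_repr K p z]
  refine Finset.dvd_sum fun i _ => ?_
  rcases Nat.eq_zero_or_pos (i : ℕ) with hi | hi
  · rw [hi, h, zero_smul]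
    exact dvd_zero _
  · obtain ⟨w, hw⟩ := dvd_pow_self (tg K p) (show (i : ℕ) ≠ 0 by omega)
    exact ⟨cf K p (i : ℕ) z • w, by rw [hw]; exact (mul_smul_comm _ _ _).symm⟩

lemma cf0_of_dvd (z : TruncPoly K 1 p) (hp0 : 0 < p) (h : tg K p ∣ z) :
    cf K p 0 z = 0 := by
  obtain ⟨w, rfl⟩ := h
  have ha : ∀ i < 1, cf K p i (tg K p) = 0 := by
    intro i hi
    interval_cases i
    rw [show tg K p = tg K p ^ 1 from (pow_one _).symm, cf_tpow, if_neg (by omega)]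
  have := cf_mul_vanish K p (tg K p) w 1 0 ha (fun j hj => absurd hj (Nat.not_lt_zero j))
  exact this 0 (by omega)

end TruncAux

set_option maxHeartbeats 2000000 in
/-- Every Lie subalgebra `D` of `Der(O₁)`, `O₁ = K[x]/(x^p)`, consisting of nilpotent
derivations and such that `O₁` has no nonzero proper `D`-invariant ideal, has dimension at
most `1`; in particular `dim D < p`. -/
theorem dim_nilpotent_transitive_subalgebra_one_var
    (K : Type*) [Field K] (p : ℕ) (hp : p.Prime) [CharP K p]
    (D : LieSubalgebra K (Derivation K (TruncPoly K 1 p) (TruncPoly K 1 p)))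
    (hnil : ∀ d ∈ D, IsNilpotent (Derivation.toLinearMap d))
    (hirr : ∀ I : Ideal (TruncPoly K 1 p),
      (∀ d ∈ D, ∀ a ∈ I, Derivation.toLinearMap d a ∈ I) → I = ⊥ ∨ I = ⊤) :
    Module.finrank K D ≤ 1 ∧ Module.finrank K D < p := by
  classical
  have hp1 : 1 < p := hp.one_lt
  set t : TruncPoly K 1 p := TruncAux.tg K p with ht
  have hder := TruncAux.derivation_apply K p hp1
  have triv0 : ∀ a : TruncPoly K 1 p, ∀ i : ℕ, i < 0 → TruncAux.cf K p i a = 0 :=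
    fun a i hi => absurd hi (Nat.not_lt_zero i)
  have cft : ∀ n : ℕ, TruncAux.cf K p n t = if n = 1 then 1 else 0 := by
    intro n
    rw [ht, show TruncAux.tg K p = TruncAux.tg K p ^ 1 from (pow_one _).symm,
      TruncAux.cf_tpow]
    simp [hp1]
  have cf1 : ∀ n : ℕ, TruncAux.cf K p n (1 : TruncPoly K 1 p) = if n = 0 then 1 else 0 := by
    intro n
    rw [show (1 : TruncPoly K 1 p) = TruncAux.tg K p ^ 0 from (pow_zero _).symm,
      TruncAux.cf_tpow]
    simp [(show 0 < p by omega)]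
  -- Step A : nilpotent elements of D with cf 0 (d t) = 0 also have cf 1 (d t) = 0
  have stepA : ∀ d : Derivation K (TruncPoly K 1 p) (TruncPoly K 1 p), d ∈ D →
      TruncAux.cf K p 0 (d t) = 0 → TruncAux.cf K p 1 (d t) = 0 := by
    intro d hd h0
    by_contra hc
    obtain ⟨n, hn⟩ := hnil d hd
    set c := TruncAux.cf K p 1 (d t) with hcdef
    have key : ∀ m : ℕ,
        TruncAux.cf K p 0 ((Derivation.toLinearMap d ^ m) t) = 0 ∧
        TruncAux.cf K p 1 ((Derivation.toLinearMap d ^ m) t) = c ^ m := by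
      intro m
      induction m with
      | zero =>
          simp only [pow_zero, Module.End.one_apply]
          exact ⟨by rw [cft]; simp, by rw [cft]; simp⟩
      | succ m ih =>
          have e1 : (Derivation.toLinearMap d ^ (m + 1)) t
              = d ((Derivation.toLinearMap d ^ m) t) := by
            rw [pow_succ', Module.End.mul_apply]; rfl
          set u := (Derivation.toLinearMap d ^ m) t with hu
          rw [e1, hder d u]
          constructor
          · have := TruncAux.cf_mul_top K p (TruncAux.Dx K p u) (d t) 0 0
              (by omega) (triv0 _) (triv0 _)
            simpa [h0] using this
          · have hb : ∀ j : ℕ, j < 1 → TruncAux.cf K p j (d t) = 0 := by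
              intro j hj
              interval_cases j
              exact h0
            have := TruncAux.cf_mul_top K p (TruncAux.Dx K p u) (d t) 0 1
              (by omega) (triv0 _) hb
            rw [zero_add] at this
            rw [this, TruncAux.cf_Dx K p, ih.2]
            simp [pow_succ, ← hcdef]
    have hcn : c ^ n = 0 := by
      have := (key n).2
      rw [hn] at this
      simpa using this.symm
    rcases Nat.eq_zero_or_pos n with h | h
    · rw [h, pow_zero] at hcn; exact one_ne_zero hcn
    · exact hc ((pow_eq_zero_iff (by omega)).1 hcn)
  -- Step C : some element of D moves the maximal ideal
  have stepC : ∃ d₀ ∈ D, TruncAux.cf K p 0 (d₀ t) ≠ 0 := by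
    by_contra hc
    push_neg at hc
    have cfmul0 : ∀ r a : TruncPoly K 1 p, TruncAux.cf K p 0 a = 0 →
        TruncAux.cf K p 0 (r * a) = 0 := by
      intro r a ha
      have := TruncAux.cf_mul_top K p r a 0 0 (by omega) (triv0 _) (triv0 _)
      simpa [ha] using this
    have hdvd : ∀ d ∈ D, TruncAux.tg K p ∣ d t :=
      fun d hd => TruncAux.dvd_of_cf0 K p _ (hc d hd)
    have hI : ∀ d ∈ D, ∀ a ∈ Ideal.span {TruncAux.tg K p},
        Derivation.toLinearMap d a ∈ Ideal.span {TruncAux.tg K p} := by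
      intro d hd a ha
      show d a ∈ Ideal.span {TruncAux.tg K p}
      rw [hder d a, Ideal.mem_span_singleton]
      exact Dvd.dvd.mul_left (hdvd d hd) _
    rcases hirr _ hI with hbot | htop
    · have htI : t ∈ Ideal.span {TruncAux.tg K p} :=
        Ideal.subset_span (Set.mem_singleton _)
      rw [hbot, Ideal.mem_bot] at htI
      have : TruncAux.cf K p 1 t = 0 := by rw [htI, map_zero]
      rw [cft] at this; simp at this
    · have h1 : (1 : TruncPoly K 1 p) ∈ Ideal.span {TruncAux.tg K p} :=
        htop ▸ Submodule.mem_top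
      rw [Ideal.mem_span_singleton] at h1
      have := TruncAux.cf0_of_dvd K p _ (by omega) h1
      rw [cf1] at this; simp at this
  -- Step D : injectivity
  have inj : ∀ d : Derivation K (TruncPoly K 1 p) (TruncPoly K 1 p), d ∈ D →
      TruncAux.cf K p 0 (d t) = 0 → d = 0 := by
    intro d hd h0
    by_contra hne
    have hft : d t ≠ 0 := by
      intro h
      refine hne (Derivation.ext fun a => ?_)
      rw [hder d a, h, mul_zero]
      rfl
    have hex : ∃ n : ℕ, ∃ d' : Derivation K (TruncPoly K 1 p) (TruncPoly K 1 p),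
        d' ∈ D ∧ TruncAux.cf K p 0 (d' t) = 0 ∧ TruncAux.cf K p n (d' t) ≠ 0 := by
      by_contra hcon
      push_neg at hcon
      refine hft (TruncAux.eq_zero_of_cf K p _ fun n => ?_)
      by_contra hn
      exact hn (hcon n d hd h0)
    obtain ⟨e, he, he0, hek⟩ := Nat.find_spec hex
    set k := Nat.find hex with hkdef
    have hlow : ∀ j, j < k → TruncAux.cf K p j (e t) = 0 := by
      intro j hj
      by_contra hcj
      exact Nat.find_min hex hj ⟨e, he, he0, hcj⟩
    have hkp : k < p := by
      by_contra hkge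
      exact hek (TruncAux.cf_apply_ge K p (by omega) _)
    have hk0 : k ≠ 0 := by
      intro h
      rw [h] at hek
      exact hek he0
    have hk1 : k ≠ 1 := by
      intro h
      rw [h] at hek
      exact hek (stepA e he he0)
    obtain ⟨d₀, hd₀, hg⟩ := stepC
    have hEt : (⁅d₀, e⁆ : Derivation K (TruncPoly K 1 p) (TruncPoly K 1 p)) t
        = TruncAux.Dx K p (e t) * d₀ t - TruncAux.Dx K p (d₀ t) * e t := by
      rw [Derivation.commutator_apply, hder d₀ (e t), hder e (d₀ t)]
    have hDxf_low : ∀ i, i < k - 1 → TruncAux.cf K p i (TruncAux.Dx K p (e t)) = 0 := by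
      intro i hi
      rw [TruncAux.cf_Dx K p, hlow (i + 1) (by omega), mul_zero]
    have h1 := TruncAux.cf_mul_vanish K p (TruncAux.Dx K p (e t)) (d₀ t) (k - 1) 0
      hDxf_low (triv0 _)
    have h2 := TruncAux.cf_mul_vanish K p (TruncAux.Dx K p (d₀ t)) (e t) 0 k
      (triv0 _) hlow
    have htop1 : TruncAux.cf K p (k - 1) (TruncAux.Dx K p (e t) * d₀ t)
        = TruncAux.cf K p (k - 1) (TruncAux.Dx K p (e t)) * TruncAux.cf K p 0 (d₀ t) := by
      have := TruncAux.cf_mul_top K p (TruncAux.Dx K p (e t)) (d₀ t) (k - 1) 0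
        (by omega) hDxf_low (triv0 _)
      simpa using this
    have hcfE : TruncAux.cf K p (k - 1)
        ((⁅d₀, e⁆ : Derivation K (TruncPoly K 1 p) (TruncPoly K 1 p)) t) ≠ 0 := by
      rw [hEt, map_sub, htop1, h2 (k - 1) (by omega), sub_zero,
        TruncAux.cf_Dx K p, show k - 1 + 1 = k by omega]
      have hkK : ((k : ℕ) : K) ≠ 0 := by
        rw [Ne, CharP.cast_eq_zero_iff K p]
        intro hdvd
        have := Nat.le_of_dvd (by omega) hdvd
        omega
      exact mul_ne_zero (mul_ne_zero hkK hek) hg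
    have hE0 : TruncAux.cf K p 0
        ((⁅d₀, e⁆ : Derivation K (TruncPoly K 1 p) (TruncPoly K 1 p)) t) = 0 := by
      rw [hEt, map_sub, h1 0 (by omega), h2 0 (by omega), sub_zero]
    exact Nat.find_min hex (show k - 1 < k by omega)
      ⟨⁅d₀, e⁆, D.lie_mem hd₀ he, hE0, hcfE⟩
  -- conclude
  let φ : D →ₗ[K] K :=
    { toFun := fun d => TruncAux.cf K p 0 ((d : Derivation K (TruncPoly K 1 p) (TruncPoly K 1 p)) t)
      map_add' := fun d e => by
        simp
      map_smul' := fun c d => by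
        show TruncAux.cf K p 0
            ((c • (d : Derivation K (TruncPoly K 1 p) (TruncPoly K 1 p))) t) = _
        rw [Derivation.smul_apply, map_smul]
        rfl }
  have hker : LinearMap.ker φ = ⊥ := by
    rw [eq_bot_iff]
    intro x hx
    have hx0 : TruncAux.cf K p 0 ((x : Derivation K (TruncPoly K 1 p) (TruncPoly K 1 p)) t) = 0 := hx
    have := inj x.1 x.2 hx0
    simpa [Submodule.mem_bot] using Subtype.ext this
  have hinj : Function.Injective φ := LinearMap.ker_eq_bot.1 hker
  have hfin : Module.finrank K D ≤ 1 := by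
    have h := LinearMap.finrank_le_finrank_of_injective hinj
    simpa using h
  exact ⟨hfin, lt_of_le_of_lt hfin hp1⟩
end

section
/- Let K be a field of characteristic p > 0, O = Oₘ the truncated polynomial algebra, d ∈ Der(O) a derivation, and g ∈ O. If the operator d + R_g on O is nilpotent (where R_g is multiplication by g), then d^{p^k} = 0 for some k; i.e., d is a nilpotent derivation. -/
section Aux
variable {K A : Type*} [CommRing K] [CommRing A] [Algebra K A]

/-- Mixed iterated Leibniz rule: if `L (a*b) = D a * b + a * L b` then a
binomial-type expansion holds for powers of `L` on products. -/
theorem mixed_leibniz (D L : A →ₗ[K] A) (hmix : ∀ a b, L (a * b) = D a * b + a * L b)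
    (n : ℕ) (a b : A) :
    (L ^ n) (a * b) = ∑ i ∈ Finset.range (n + 1),
      n.choose i • ((D ^ i) a * (L ^ (n - i)) b) := by
  induction n with
  | zero => simp
  | succ n ih =>
    rw [pow_succ', Module.End.mul_apply, ih, map_sum]
    have step : ∀ i ∈ Finset.range (n + 1),
        L (n.choose i • ((D ^ i) a * (L ^ (n - i)) b)) =
        n.choose i • ((D ^ (i+1)) a * (L ^ (n + 1 - (i+1))) b)
        + n.choose i • ((D ^ i) a * (L ^ (n + 1 - i)) b) := by
      intro i hi
      rw [Finset.mem_range] at hi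
      rw [map_nsmul, hmix, smul_add]
      have e1 : n + 1 - (i+1) = n - i := by omega
      have e2 : n + 1 - i = (n - i) + 1 := by omega
      simp only [e1, e2, pow_succ', Module.End.mul_apply]
    rw [Finset.sum_congr rfl step, Finset.sum_add_distrib]
    have h1 : ∑ i ∈ Finset.range (n + 1),
          n.choose i • ((D ^ (i+1)) a * (L ^ (n + 1 - (i+1))) b)
        = ∑ i ∈ Finset.range (n + 2), (if i = 0 then 0 else n.choose (i-1)) •
            ((D ^ i) a * (L ^ (n + 1 - i)) b) := by
      rw [Finset.sum_range_succ' (fun i => (if i = 0 then 0 else n.choose (i-1)) •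
            ((D ^ i) a * (L ^ (n + 1 - i)) b))]
      simp
    have h2 : ∑ i ∈ Finset.range (n + 2), n.choose i •
            ((D ^ i) a * (L ^ (n + 1 - i)) b)
        = ∑ i ∈ Finset.range (n + 1), n.choose i • ((D ^ i) a * (L ^ (n + 1 - i)) b) := by
      rw [Finset.sum_range_succ, Nat.choose_succ_self, zero_smul, add_zero]
    rw [h1, ← h2, ← Finset.sum_add_distrib]
    apply Finset.sum_congr rfl
    intro i _
    rw [← add_smul]
    congr 1
    cases i with
    | zero => simp
    | succ j => rw [if_neg (Nat.succ_ne_zero _), Nat.add_sub_cancel, Nat.choose_succ_succ]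

variable {p : ℕ}

theorem choose_smul_vanish (hp : p.Prime) (hchar : (p : A) = 0) {i : ℕ}
    (hi0 : i ≠ 0) (hip : i < p) (x : A) : p.choose i • x = 0 := by
  obtain ⟨t, ht⟩ := hp.dvd_choose_self hi0 hip
  rw [nsmul_eq_mul, ht, Nat.cast_mul, hchar, zero_mul, zero_mul]

theorem sum_endpoints {n : ℕ} (hn : 0 < n) (F : ℕ → A)
    (hz : ∀ i, 0 < i → i < n → F i = 0) :
    ∑ i ∈ Finset.range (n + 1), F i = F 0 + F n := by
  rw [Finset.sum_range_succ]
  have h0 : ∑ i ∈ Finset.range n, F i = F 0 := by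
    have hcong : ∀ i ∈ Finset.range n, F i = if i = 0 then F i else 0 := by
      intro i hi
      rw [Finset.mem_range] at hi
      rcases Nat.eq_zero_or_pos i with h | h
      · simp [h]
      · rw [if_neg (by omega), hz i h hi]
    rw [Finset.sum_congr rfl hcong, Finset.sum_ite_eq' (Finset.range n) 0 F,
      if_pos (Finset.mem_range.2 hn)]
  rw [h0]

/-- In characteristic `p`, the `p`-th power of a derivation satisfies Leibniz. -/
theorem pow_p_leibniz (hp : p.Prime) (hchar : (p : A) = 0)
    (D : A →ₗ[K] A) (hD : ∀ a b, D (a * b) = D a * b + a * D b) (a b : A) :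
    (D ^ p) (a * b) = (D ^ p) a * b + a * (D ^ p) b := by
  rw [mixed_leibniz D D hD p a b,
    sum_endpoints hp.pos _ (fun i h1 h2 => choose_smul_vanish hp hchar (by omega) h2 _)]
  simp [add_comm]

/-- Key step (Jacobson-type formula): `(D + R_g)^p = D^p + R_{(D+R_g)^p 1}`. -/
theorem key_formula (hp : p.Prime) (hchar : (p : A) = 0)
    (D : A →ₗ[K] A) (hD : ∀ a b, D (a * b) = D a * b + a * D b) (g : A) :
    (D + LinearMap.mulLeft K g) ^ p
      = D ^ p + LinearMap.mulLeft K (((D + LinearMap.mulLeft K g) ^ p) 1) := by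
  set L := D + LinearMap.mulLeft K g with hL
  have hmix : ∀ a b, L (a * b) = D a * b + a * L b := by
    intro a b
    simp only [hL, LinearMap.add_apply, LinearMap.mulLeft_apply, hD]
    ring
  ext f
  have hml := mixed_leibniz D L hmix p f 1
  rw [mul_one] at hml
  rw [LinearMap.add_apply, LinearMap.mulLeft_apply, hml,
    sum_endpoints hp.pos _ (fun i h1 h2 => choose_smul_vanish hp hchar (by omega) h2 _)]
  simp [add_comm, mul_comm]

/-- Iterated Jacobson formula: `(D + R_g)^{p^k} = D^{p^k} + R_{(D+R_g)^{p^k} 1}`,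
together with the fact that `D^{p^k}` still satisfies Leibniz. -/
theorem iter_formula (hp : p.Prime) (hchar : (p : A) = 0)
    (D : A →ₗ[K] A) (hD : ∀ a b, D (a * b) = D a * b + a * D b) (g : A) (k : ℕ) :
    (∀ a b, (D ^ p ^ k) (a * b) = (D ^ p ^ k) a * b + a * (D ^ p ^ k) b) ∧
    (D + LinearMap.mulLeft K g) ^ p ^ k
      = D ^ p ^ k + LinearMap.mulLeft K (((D + LinearMap.mulLeft K g) ^ p ^ k) 1) := by
  induction k with
  | zero =>
    constructor
    · simpa using hD
    · have h1 : D 1 = 0 := by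
        have h := hD 1 1
        rw [mul_one, mul_one, one_mul] at h
        exact right_eq_add.mp h
      simp only [pow_zero, pow_one]
      congr 1
      rw [LinearMap.add_apply, LinearMap.mulLeft_apply, h1, mul_one, zero_add]
  | succ k hk =>
    have e : ∀ (X : A →ₗ[K] A), X ^ p ^ (k + 1) = (X ^ p ^ k) ^ p := by
      intro X; rw [pow_succ, pow_mul]
    constructor
    · intro a b
      simp only [e]
      exact pow_p_leibniz hp hchar (D ^ p ^ k) hk.1 a b
    · simp only [e]
      rw [hk.2]
      exact key_formula hp hchar _ hk.1 _
end Aux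

/-- If `d` is a derivation of `O = Oₘ` and `g ∈ O` is such that the operator `d + R_g`
(`R_g` = multiplication by `g`) is nilpotent, then `d^{p^k} = 0` for some `k`;
i.e. `d` is a nilpotent derivation. -/
theorem derivation_nilpotent_of_sum_with_mul_nilpotent
    (K : Type*) [Field K] (p m : ℕ) (hp : p.Prime) [CharP K p]
    (d : Derivation K (TruncPoly K m p) (TruncPoly K m p)) (g : TruncPoly K m p)
    (h : IsNilpotent (Derivation.toLinearMap d + LinearMap.mulLeft K g)) :
    ∃ k : ℕ, Derivation.toLinearMap d ^ p ^ k = 0 := by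
  set D := Derivation.toLinearMap d with hDdef
  have hD : ∀ a b : TruncPoly K m p, D (a * b) = D a * b + a * D b := by
    intro a b
    have := d.leibniz a b
    simp only [smul_eq_mul] at this
    show d (a * b) = d a * b + a * d b
    rw [this]; ring
  have hchar : (p : TruncPoly K m p) = 0 := by
    rw [← map_natCast (algebraMap K (TruncPoly K m p)) p, CharP.cast_eq_zero K p, map_zero]
  obtain ⟨N, hN⟩ := h
  have hle : N ≤ p ^ N := Nat.le_of_lt (Nat.lt_pow_self (n := N) hp.one_lt)
  have hLz : (D + LinearMap.mulLeft K g) ^ p ^ N = 0 := pow_eq_zero_of_le hle hN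
  have hk := (iter_formula hp hchar D hD g N).2
  rw [hLz] at hk
  refine ⟨N, ?_⟩
  have : LinearMap.mulLeft K ((0 : TruncPoly K m p →ₗ[K] TruncPoly K m p) 1) = 0 := by
    simp [LinearMap.mulLeft_zero_eq_zero]
  rw [this, add_zero] at hk
  exact hk.symm
end

section
/- Let L be a Lie algebra whose derived subalgebra [L, L] is nilpotent, and let H be a Cartan subalgebra of L. Then L = H + [L, L] is a decomposition of L into a sum of two nilpotent subalgebras. -/
/-- If the derived subalgebra `[L,L]` of a finite-dimensional Lie algebra `L` is nilpotent
and `H` is a Cartan subalgebra, then `L = H + [L,L]` is a decomposition of `L` into a sum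
of two nilpotent subalgebras. -/
theorem cartan_add_derived_of_nilpotent_derived
    (K : Type*) [Field K]
    (L : Type*) [LieRing L] [LieAlgebra K L] [FiniteDimensional K L]
    (hder : LieRing.IsNilpotent (LieAlgebra.derivedSeries K L 1))
    (H : LieSubalgebra K L) (hH : H.IsCartanSubalgebra) :
    (∀ x : L, ∃ a ∈ H, ∃ b ∈ LieAlgebra.derivedSeries K L 1, x = a + b) ∧
    LieRing.IsNilpotent H ∧
    LieRing.IsNilpotent (LieAlgebra.derivedSeries K L 1) := by
  refine ⟨?_, hH.nilpotent, hder⟩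
  haveI := hH
  -- The derived ideal, viewed as an `H`-submodule of `L`.
  let D : LieSubmodule K H L :=
    { (LieAlgebra.derivedSeries K L 1 : LieSubmodule K L L).toSubmodule with
      lie_mem := fun {x m} hm => (LieAlgebra.derivedSeries K L 1).lie_mem hm }
  have hcompl := LieModule.isCompl_genWeightSpace_zero_posFittingComp K H L
  have hzero : LieModule.genWeightSpace L (0 : H → K) = H.toLieSubmodule :=
    LieAlgebra.rootSpace_zero_eq K L H
  have hpos : LieModule.posFittingComp K H L ≤ D := by
    rw [LieModule.posFittingComp]
    refine iSup_le fun x => fun m hm => ?_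
    obtain ⟨n, hn⟩ := (LieModule.mem_posFittingCompOf K x m).mp hm 1
    have : m = ⁅(x : L), n⁆ := by
      rw [← hn]; simp [LieModule.toEnd_apply_apply]
    rw [this]
    show ⁅(x : L), n⁆ ∈ LieAlgebra.derivedSeries K L 1
    have h1 : LieAlgebra.derivedSeries K L 1 = ⁅(⊤ : LieIdeal K L), (⊤ : LieIdeal K L)⁆ := by
      rw [LieAlgebra.derivedSeries_def, LieAlgebra.derivedSeriesOfIdeal_succ,
        LieAlgebra.derivedSeriesOfIdeal_zero]
    rw [h1]
    exact LieSubmodule.lie_mem_lie (LieSubmodule.mem_top _) (LieSubmodule.mem_top _)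
  intro x
  have hx : x ∈ H.toLieSubmodule ⊔ LieModule.posFittingComp K H L := by
    rw [← hzero, hcompl.sup_eq_top]; trivial
  obtain ⟨a, ha, b, hb, hab⟩ := (LieSubmodule.mem_sup _ _ _).mp hx
  exact ⟨a, ha, b, hpos hb, hab.symm⟩
end

section
/- Let K be a field of characteristic p > 2, let L be the two-dimensional non-abelian Lie algebra over K with basis {h, e}, [h,e] = e, and let V be a p-dimensional irreducible L-module. Then the semidirect product L ⋉ V cannot be written as a sum of two nilpotent Lie subalgebras. -/
open Module
set_option maxHeartbeats 2000000 in

/-- (Internal form.)  Let `K` have characteristic `p > 2`, let `g` be the semidirect product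
of the two-dimensional non-abelian Lie algebra `H = ⟨h, e⟩`, `⁅h,e⁆ = e`, with the
`p`-dimensional irreducible `H`-module `V` with basis `v₀, …, v_{p-1}`, `⁅e, vᵢ⁆ = vᵢ₊₁`
(indices mod `p`), `⁅h, vᵢ⁆ = i · vᵢ`.  Then `g` cannot be written as a sum of two
nilpotent Lie subalgebras. -/
theorem two_dim_nonabelian_semidirect_not_sum_of_two_nilpotent
    (K : Type*) [Field K] (p : ℕ) (hp : p.Prime) [CharP K p] (hp2 : 2 < p)
    (g : Type*) [LieRing g] [LieAlgebra K g] [FiniteDimensional K g]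
    (H : LieSubalgebra K g) (V : LieIdeal K g)
    (hVab : IsLieAbelian V)
    (hdisj : H.toSubmodule ⊓ LieSubmodule.toSubmodule V = ⊥)
    (hdecomp : ∀ x : g, ∃ a ∈ H, ∃ b ∈ V, x = a + b)
    (h e : g) (hh : h ∈ H) (he : e ∈ H)
    (hHspan : H.toSubmodule = Submodule.span K {h, e})
    (hHind : LinearIndependent K ![h, e])
    (hbr : ⁅h, e⁆ = e)
    (v : ZMod p → g) (hv : ∀ i, v i ∈ V)
    (hVspan : LieSubmodule.toSubmodule V = Submodule.span K (Set.range v))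
    (hVind : LinearIndependent K v)
    (hev : ∀ i : ZMod p, ⁅e, v i⁆ = v (i + 1))
    (hhv : ∀ i : ZMod p, ⁅h, v i⁆ = (ZMod.castHom (dvd_refl p) K i) • v i) :
    ¬ ∃ A B : LieSubalgebra K g, LieRing.IsNilpotent A ∧
        LieRing.IsNilpotent B ∧ (∀ x : g, ∃ a ∈ A, ∃ b ∈ B, x = a + b) := by
  rintro ⟨A, B, nA, nB, hsum⟩
  haveI : Fact p.Prime := ⟨hp⟩
  haveI : NeZero p := ⟨hp.ne_zero⟩
  have hrangeHE : Set.range ![h, e] = {h, e} := by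
    simp [Matrix.range_cons, Matrix.range_empty, Set.pair_comm]
  have hindep : LinearIndependent K (Sum.elim ![h, e] v) := by
    apply hHind.sum_type hVind
    rw [hrangeHE, ← hHspan, ← hVspan]
    exact disjoint_iff.mpr hdisj
  have hspan : ⊤ ≤ Submodule.span K (Set.range (Sum.elim ![h, e] v)) := by
    rw [Set.Sum.elim_range]
    intro x _
    obtain ⟨a, ha, b, hb, rfl⟩ := hdecomp x
    have h1 : H.toSubmodule ≤ Submodule.span K (Set.range ![h, e] ∪ Set.range v) := by
      rw [hHspan, ← hrangeHE]
      exact Submodule.span_mono Set.subset_union_left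
    have h2 : LieSubmodule.toSubmodule V ≤ Submodule.span K (Set.range ![h, e] ∪ Set.range v) := by
      rw [hVspan]
      exact Submodule.span_mono Set.subset_union_right
    exact Submodule.add_mem _ (h1 ha) (h2 hb)
  let b : Basis (Fin 2 ⊕ ZMod p) K g := Basis.mk hindep hspan
  have hb : ∀ i, b i = Sum.elim ![h, e] v i := fun i => Basis.mk_apply hindep hspan i
  have hco : ∀ i j, b.coord i (Sum.elim ![h, e] v j) = if j = i then 1 else 0 := by
    intro i j
    rw [← hb, Basis.coord_apply, b.repr_self_apply]
  have hdimg : 4 < Module.finrank K g := by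
    rw [finrank_eq_card_basis b]
    simp only [Fintype.card_sum, Fintype.card_fin, ZMod.card]
    omega
  set φ : g →ₗ[K] K := b.coord (Sum.inl 0) with hφdef
  set ψ : g →ₗ[K] K := b.coord (Sum.inl 1) with hψdef
  set κ : ZMod p → (g →ₗ[K] K) := fun j => b.coord (Sum.inr j) with hκdef
  have hφh : φ h = 1 := by simpa [hφdef] using hco (Sum.inl 0) (Sum.inl 0)
  have hφe : φ e = 0 := by simpa [hφdef] using hco (Sum.inl 0) (Sum.inl 1)
  have hφv : ∀ i, φ (v i) = 0 := fun i => by simpa [hφdef] using hco (Sum.inl 0) (Sum.inr i)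
  have hψh : ψ h = 0 := by simpa [hψdef] using hco (Sum.inl 1) (Sum.inl 0)
  have hψe : ψ e = 1 := by simpa [hψdef] using hco (Sum.inl 1) (Sum.inl 1)
  have hψv : ∀ i, ψ (v i) = 0 := fun i => by simpa [hψdef] using hco (Sum.inl 1) (Sum.inr i)
  have hκh : ∀ j, κ j h = 0 := fun j => by simpa [hκdef] using hco (Sum.inr j) (Sum.inl 0)
  have hκe : ∀ j, κ j e = 0 := fun j => by simpa [hκdef] using hco (Sum.inr j) (Sum.inl 1)
  have hκv : ∀ j i, κ j (v i) = if i = j then 1 else 0 := fun j i => by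
    simpa [hκdef] using hco (Sum.inr j) (Sum.inr i)
  have hzero : ∀ u : g, φ u = 0 → ψ u = 0 → (∀ j, κ j u = 0) → u = 0 := by
    intro u h1 h2 h3
    have hr : b.repr u = 0 := by
      ext i
      rcases i with i | j
      · fin_cases i
        · exact h1
        · exact h2
      · exact h3 j
    simpa using congrArg b.repr.symm hr
  have hFV : ∀ (F : g →ₗ[K] K), (∀ i, F (v i) = 0) → ∀ u ∈ V, F u = 0 := by
    intro F hF u hu
    have hle : LieSubmodule.toSubmodule V ≤ LinearMap.ker F := by
      rw [hVspan, Submodule.span_le]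
      rintro _ ⟨i, rfl⟩
      exact hF i
    exact hle hu
  have hφV : ∀ u ∈ V, φ u = 0 := hFV φ hφv
  have hψV : ∀ u ∈ V, ψ u = 0 := hFV ψ hψv
  have habV : ∀ x y : g, x ∈ V → y ∈ V → ⁅x, y⁆ = (0 : g) := by
    intro x y hx hy
    have h0 : (⁅(⟨x, hx⟩ : V), (⟨y, hy⟩ : V)⁆ : V) = 0 := trivial_lie_zero _ _ _ _
    calc ⁅x, y⁆ = (↑(⁅(⟨x, hx⟩ : V), (⟨y, hy⟩ : V)⁆ : V) : g) := rfl
      _ = ((0 : V) : g) := by rw [h0]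
      _ = 0 := rfl
  set cK : ZMod p → K := fun i => ZMod.castHom (dvd_refl p) K i with hcKdef
  have hcK_inj : ∀ j : ZMod p, j ≠ 0 → cK j ≠ 0 := by
    intro j hj hc
    exact hj ((ZMod.castHom (dvd_refl p) K).injective (by simpa [hcKdef] using hc))
  have hbr' : ⁅e, h⁆ = -e := by rw [← lie_skew, hbr]
  have hvh : ∀ i, ⁅v i, h⁆ = -(cK i • v i) := fun i => by rw [← lie_skew, hhv]
  have hve : ∀ i, ⁅v i, e⁆ = -v (i + 1) := fun i => by rw [← lie_skew, hev]
  have hφbr : ∀ x y : g, φ ⁅x, y⁆ = 0 := by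
    have key : (LinearMap.mk₂ K (fun x y : g => φ ⁅x, y⁆)
        (fun m₁ m₂ n => by simp [add_lie])
        (fun c m n => by simp [smul_lie])
        (fun m n₁ n₂ => by simp [lie_add])
        (fun c m n => by simp [lie_smul]) : g →ₗ[K] g →ₗ[K] K) = 0 := by
      apply b.ext; intro i
      apply b.ext; intro j
      simp only [hb, LinearMap.mk₂_apply, LinearMap.zero_apply]
      rcases i with i | k <;> rcases j with j | l
      · fin_cases i <;> fin_cases j <;>
          simp [hbr, hbr', hφe, lie_self]
      · fin_cases i <;>
          simp [hhv, hev, hφv, hcKdef]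
      · fin_cases j <;>
          simp [hvh, hve, hφv, hcKdef]
      · simp [habV _ _ (hv k) (hv l)]
    intro x y
    have := congrArg (fun T => T x y) key
    simpa using this
  have hψbr : ∀ x y : g, ψ ⁅x, y⁆ = φ x * ψ y - φ y * ψ x := by
    have key : (LinearMap.mk₂ K (fun x y : g => ψ ⁅x, y⁆ - (φ x * ψ y - φ y * ψ x))
        (fun m₁ m₂ n => by simp [add_lie]; ring)
        (fun c m n => by simp [smul_lie, smul_eq_mul]; ring)
        (fun m n₁ n₂ => by simp [lie_add]; ring)
        (fun c m n => by simp [lie_smul, smul_eq_mul]; ring) : g →ₗ[K] g →ₗ[K] K) = 0 := by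
      apply b.ext; intro i
      apply b.ext; intro j
      simp only [hb, LinearMap.mk₂_apply, LinearMap.zero_apply]
      rcases i with i | k <;> rcases j with j | l
      · fin_cases i <;> fin_cases j <;>
          simp [hbr, hbr', hφe, hφh, hψe, hψh, lie_self]
      · fin_cases i <;>
          simp [hhv, hev, hφv, hψv, hφh, hφe, hψh, hψe, hcKdef]
      · fin_cases j <;>
          simp [hvh, hve, hφv, hψv, hφh, hφe, hψh, hψe, hcKdef]
      · simp [habV _ _ (hv k) (hv l), hφv, hψv]
    intro x y
    have := congrArg (fun T => T x y) key
    simp only [LinearMap.mk₂_apply, LinearMap.zero_apply] at this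
    exact sub_eq_zero.mp this
  have hrec : ∀ (j : ZMod p) (x u : g), u ∈ V →
      κ j ⁅x, u⁆ = φ x * cK j * κ j u + ψ x * κ (j - 1) u := by
    intro j
    set Tj : g →ₗ[K] g →ₗ[K] K := LinearMap.mk₂ K
        (fun x u : g => κ j ⁅x, u⁆ - (φ x * cK j * κ j u + ψ x * κ (j - 1) u))
        (fun m₁ m₂ n => by simp [add_lie]; ring)
        (fun c m n => by simp [smul_lie, smul_eq_mul]; ring)
        (fun m n₁ n₂ => by simp [lie_add]; ring)
        (fun c m n => by simp [lie_smul, smul_eq_mul]; ring) with hTjdef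
    have hTv : ∀ i, Tj.flip (v i) = 0 := by
      intro i
      apply b.ext; intro k
      simp only [hb, LinearMap.flip_apply, hTjdef, LinearMap.mk₂_apply, LinearMap.zero_apply]
      rcases k with k | l
      · fin_cases k
        · -- x = h
          show κ j ⁅h, v i⁆ - (φ h * cK j * κ j (v i) + ψ h * κ (j-1) (v i)) = 0
          rw [hhv i, hφh, hψh, map_smul]
          simp only [smul_eq_mul, hκv, one_mul, zero_mul, add_zero]
          by_cases hij : i = j
          · subst hij; simp [hcKdef]
          · simp [hij]
        · -- x = e
          show κ j ⁅e, v i⁆ - (φ e * cK j * κ j (v i) + ψ e * κ (j-1) (v i)) = 0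
          rw [hev i, hφe, hψe]
          simp only [hκv, zero_mul, one_mul, zero_add]
          by_cases hij : i + 1 = j
          · have h2 : i = j - 1 := eq_sub_iff_add_eq.mpr hij
            simp [hij, h2]
          · have h2 : ¬ (i = j - 1) := fun hc => hij (by rw [hc]; ring)
            simp [hij, h2]
      · show κ j ⁅v l, v i⁆ - (φ (v l) * cK j * κ j (v i) + ψ (v l) * κ (j-1) (v i)) = 0
        rw [habV _ _ (hv l) (hv i), hφv, hψv]
        simp
    intro x u hu
    have hle : LieSubmodule.toSubmodule V ≤ LinearMap.ker Tj.flip := by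
      rw [hVspan, Submodule.span_le]
      rintro _ ⟨i, rfl⟩
      exact hTv i
    have h0 : Tj x u = 0 := by
      have : Tj.flip u = 0 := hle hu
      have := congrArg (fun F => F x) this
      simpa using this
    rw [hTjdef] at h0
    simp only [LinearMap.mk₂_apply] at h0
    exact sub_eq_zero.mp h0
  have hker : ∀ x : g, φ x = 0 → ψ x = 0 → x ∈ V := by
    intro x h1 h2
    obtain ⟨a, ha, u, hu, rfl⟩ := hdecomp x
    have haH : a ∈ Submodule.span K {h, e} := by rw [← hHspan]; exact ha
    obtain ⟨c, d, hcd⟩ := Submodule.mem_span_pair.mp haH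
    have hφx : φ (a + u) = c := by
      rw [← hcd]; simp [hφh, hφe, hφV u hu]
    have hψx : ψ (a + u) = d := by
      rw [← hcd]; simp [hψh, hψe, hψV u hu]
    have hc : c = 0 := hφx.symm.trans h1
    have hd : d = 0 := hψx.symm.trans h2
    have ha0 : a = 0 := by rw [← hcd, hc, hd]; simp
    rw [ha0, zero_add]
    exact hu
  have adpow : ∀ (N : LieSubalgebra K g), LieRing.IsNilpotent N →
      ∀ x ∈ N, ∀ u ∈ N, ∃ n, ((LieAlgebra.ad K g x) ^ n) u = 0 := by
    intro N hN x hx u hu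
    haveI := hN
    obtain ⟨n, hn⟩ := LieModule.isNilpotent_toEnd_of_isNilpotent K (↥N) (↥N) (⟨x, hx⟩ : N)
    refine ⟨n, ?_⟩
    have key : ∀ (m : ℕ) (z : g) (hz : z ∈ N),
        ((LieAlgebra.ad K g x) ^ m) z
          = (((LieModule.toEnd K (↥N) (↥N) ⟨x, hx⟩) ^ m) ⟨z, hz⟩ : g) := by
      intro m
      induction m with
      | zero => intro z hz; simp
      | succ m ih =>
        intro z hz
        rw [pow_succ, Module.End.mul_apply, pow_succ, Module.End.mul_apply]
        have hbz : ⁅x, z⁆ ∈ N := N.lie_mem hx hz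
        have hstep : (LieModule.toEnd K (↥N) (↥N) ⟨x, hx⟩) ⟨z, hz⟩ = ⟨⁅x, z⁆, hbz⟩ := by
          ext
          simp [LieModule.toEnd_apply_apply]
        rw [hstep, ← ih ⁅x, z⁆ hbz]
        simp [LieAlgebra.ad_apply]
    rw [key n u hu, hn]
    simp
  have hlA : ∀ (N : LieSubalgebra K g), LieRing.IsNilpotent N →
      ∀ x ∈ N, ∀ y ∈ N, φ x * ψ y = φ y * ψ x := by
    intro N hN
    have iter : ∀ (x' : g) (n : ℕ) (z : g), φ z = 0 →
        φ (((LieAlgebra.ad K g x') ^ n) z) = 0 ∧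
        ψ (((LieAlgebra.ad K g x') ^ n) z) = φ x' ^ n * ψ z := by
      intro x' n
      induction n with
      | zero => intro z hz; simp [hz]
      | succ n ih =>
        intro z hz
        rw [pow_succ, Module.End.mul_apply]
        have h1 : φ ((LieAlgebra.ad K g x') z) = 0 := by
          rw [LieAlgebra.ad_apply]; exact hφbr _ _
        have h2 : ψ ((LieAlgebra.ad K g x') z) = φ x' * ψ z := by
          rw [LieAlgebra.ad_apply, hψbr, hz]; ring
        obtain ⟨ih1, ih2⟩ := ih _ h1
        exact ⟨ih1, by rw [ih2, h2]; ring⟩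
    have main : ∀ x ∈ N, ∀ y ∈ N, φ x ≠ 0 → φ x * ψ y = φ y * ψ x := by
      intro x hx y hy hx0
      obtain ⟨n, hn⟩ := adpow N hN x hx ⁅x, y⁆ (N.lie_mem hx hy)
      have h2 := (iter x n ⁅x, y⁆ (hφbr x y)).2
      rw [hn] at h2
      simp only [map_zero] at h2
      have h3 : ψ ⁅x, y⁆ = 0 := by
        rcases mul_eq_zero.mp h2.symm with hc | hc
        · exact absurd hc (pow_ne_zero n hx0)
        · exact hc
      rw [hψbr] at h3
      exact sub_eq_zero.mp h3
    intro x hx y hy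
    by_cases hx0 : φ x = 0
    · by_cases hy0 : φ y = 0
      · rw [hx0, hy0]; ring
      · exact (main y hy x hx hy0).symm
    · exact main x hx y hy hx0
  have hpow : ∀ x : g, ψ x = 0 → ∀ (n : ℕ), ∀ u ∈ V, ∀ j,
      κ j (((LieAlgebra.ad K g x) ^ n) u) = (φ x * cK j) ^ n * κ j u := by
    intro x hx n
    induction n with
    | zero => intro u hu j; rw [pow_zero, pow_zero, Module.End.one_apply, one_mul]
    | succ n ih =>
      intro u hu j
      rw [pow_succ, Module.End.mul_apply, LieAlgebra.ad_apply]
      rw [ih ⁅x, u⁆ (V.lie_mem hu) j]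
      rw [hrec j x u hu, hx]
      ring
  have hLemV2 : ∀ x : g, ψ x ≠ 0 → ∀ (n : ℕ), ∀ u ∈ V,
      ((LieAlgebra.ad K g x) ^ n) u = 0 → u = 0 := by
    intro x hx n
    induction n with
    | zero =>
      intro u hu h0
      rw [pow_zero, Module.End.one_apply] at h0
      exact h0
    | succ n ih =>
      intro u hu h0
      rw [pow_succ, Module.End.mul_apply, LieAlgebra.ad_apply] at h0
      have hbu : ⁅x, u⁆ = 0 := ih ⁅x, u⁆ (V.lie_mem hu) h0
      have heq : ∀ j : ZMod p, φ x * cK j * κ j u + ψ x * κ (j - 1) u = 0 := by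
        intro j; rw [← hrec j x u hu, hbu]; simp
      have hdesc : ∀ k : ℕ, κ (-1 - (k : ZMod p)) u = 0 := by
        intro k
        induction k with
        | zero =>
          have h1 := heq 0
          have hcK0 : cK 0 = 0 := by simp [hcKdef]
          rw [hcK0] at h1
          simp only [mul_zero, zero_mul, zero_add] at h1
          rcases mul_eq_zero.mp h1 with hc | hc
          · exact absurd hc hx
          · rw [show ((-1 : ZMod p) - (0 : ℕ)) = 0 - 1 by push_cast; ring]
            exact hc
        | succ k ihk =>
          have h1 := heq (-1 - (k : ZMod p))
          rw [ihk] at h1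
          simp only [mul_zero, zero_add] at h1
          rcases mul_eq_zero.mp h1 with hc | hc
          · exact absurd hc hx
          · rw [show ((-1 : ZMod p) - ((k + 1 : ℕ) : ZMod p)) = -1 - (k : ZMod p) - 1 by
              push_cast; ring]
            exact hc
      have hall : ∀ j, κ j u = 0 := by
        intro j
        have hk := hdesc (-1 - j).val
        rw [show ((-1 : ZMod p) - (((-1 - j).val : ℕ) : ZMod p)) = j by
          rw [ZMod.natCast_rightInverse (-1 - j)]; ring] at hk
        exact hk
      exact hzero u (hφV u hu) (hψV u hu) hall
  have hLemV1 : ∀ x : g, φ x ≠ 0 → ψ x = 0 → ∀ u ∈ V,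
      (∃ n, ((LieAlgebra.ad K g x) ^ n) u = 0) → u ∈ Submodule.span K {v 0} := by
    rintro x hx0 hx1 u hu ⟨n, hn⟩
    have hj : ∀ j : ZMod p, j ≠ 0 → κ j u = 0 := by
      intro j hjne
      have h1 := hpow x hx1 n u hu j
      rw [hn] at h1
      simp only [map_zero] at h1
      have hne : φ x * cK j ≠ 0 := mul_ne_zero hx0 (hcK_inj j hjne)
      rcases mul_eq_zero.mp h1.symm with hc | hc
      · exact absurd hc (pow_ne_zero n hne)
      · exact hc
    have hu0 : u - κ 0 u • v 0 = 0 := by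
      apply hzero
      · simp [hφV u hu, hφv]
      · simp [hψV u hu, hψv]
      · intro j
        by_cases hj0 : j = 0
        · subst hj0; simp [hκv]
        · simp [hκv, hj j hj0, Ne.symm hj0]
    have : u = κ 0 u • v 0 := by rwa [sub_eq_zero] at hu0
    rw [this]
    exact Submodule.smul_mem _ _ (Submodule.mem_span_singleton_self _)
  have hsing : ∀ y : g, Module.finrank K (Submodule.span K ({y} : Set g)) ≤ 1 := by
    intro y
    by_cases hy : y = 0
    · subst hy
      rw [Submodule.span_zero_singleton]
      simp
    · rw [finrank_span_singleton hy]
  have hsing2 : ∀ y : K × K, Module.finrank K (Submodule.span K ({y} : Set (K × K))) ≤ 1 := by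
    intro y
    by_cases hy : y = 0
    · subst hy
      rw [Submodule.span_zero_singleton]
      simp
    · rw [finrank_span_singleton hy]
  have hdimN : ∀ (N : LieSubalgebra K g), LieRing.IsNilpotent N →
      ∀ x0 ∈ N, (φ x0 ≠ 0 ∨ ψ x0 ≠ 0) → Module.finrank K N.toSubmodule ≤ 2 := by
    intro N hN x0 hx0 hcase
    set Φ : g →ₗ[K] K × K := LinearMap.prod φ ψ with hΦdef
    set f : N.toSubmodule →ₗ[K] K × K := Φ.comp N.toSubmodule.subtype with hfdef
    have hrn := LinearMap.finrank_range_add_finrank_ker f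
    have hfapp : ∀ z : N.toSubmodule, f z = (φ (z : g), ψ (z : g)) := fun z => rfl
    have hrange : LinearMap.range f ≤ Submodule.span K {(φ x0, ψ x0)} := by
      rintro - ⟨⟨a, ha⟩, rfl⟩
      have hcomm := hlA N hN x0 hx0 a ha
      rw [Submodule.mem_span_singleton]
      rcases hcase with hc | hc
      · refine ⟨φ a / φ x0, ?_⟩
        rw [hfapp]
        rw [Prod.smul_mk, Prod.mk.injEq]
        constructor
        · rw [smul_eq_mul]; field_simp
        · rw [smul_eq_mul]; field_simp; linear_combination - hcomm
      · refine ⟨ψ a / ψ x0, ?_⟩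
        rw [hfapp]
        rw [Prod.smul_mk, Prod.mk.injEq]
        constructor
        · rw [smul_eq_mul]; field_simp; linear_combination hcomm
        · rw [smul_eq_mul]; field_simp
    have h1 : Module.finrank K (LinearMap.range f) ≤ 1 :=
      le_trans (Submodule.finrank_mono hrange) (hsing2 _)
    have hmem : ∀ z : N.toSubmodule, f z = 0 → (z : g) ∈ V := by
      intro z hz
      have e1 : φ (z : g) = 0 := congrArg Prod.fst hz
      have e2 : ψ (z : g) = 0 := congrArg Prod.snd hz
      exact hker _ e1 e2
    have h2 : Module.finrank K (LinearMap.ker f) ≤ 1 := by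
      by_cases hψ0 : ψ x0 = 0
      · have hφ0 : φ x0 ≠ 0 := by tauto
        have hmap : ∀ z : LinearMap.ker f, ((z : N.toSubmodule) : g) ∈ Submodule.span K {v 0} := by
          intro z
          exact hLemV1 x0 hφ0 hψ0 _ (hmem _ (LinearMap.mem_ker.mp z.2))
            (adpow N hN x0 hx0 _ (z : N.toSubmodule).2)
        set ι : LinearMap.ker f →ₗ[K] Submodule.span K ({v 0} : Set g) :=
          LinearMap.codRestrict _ ((N.toSubmodule.subtype).comp (LinearMap.ker f).subtype) hmap
          with hιdef
        have hinj : Function.Injective ι := by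
          intro z₁ z₂ hz
          have h3 := congrArg (Subtype.val) hz
          exact Subtype.ext (Subtype.ext h3)
        exact le_trans (LinearMap.finrank_le_finrank_of_injective hinj) (hsing _)
      · have hbot : LinearMap.ker f = ⊥ := by
          rw [eq_bot_iff]
          rintro z hz
          obtain ⟨n, hn⟩ := adpow N hN x0 hx0 _ z.2
          have h3 : (z : g) = 0 :=
            hLemV2 x0 hψ0 n _ (hmem _ (LinearMap.mem_ker.mp hz)) hn
          simpa using Subtype.ext h3
        rw [hbot, finrank_bot]
        omega
    omega
  -- main argument
  have key : ∀ (A' B' : LieSubalgebra K g), LieRing.IsNilpotent A' →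
      LieRing.IsNilpotent B' → (∀ x : g, ∃ a ∈ A', ∃ c ∈ B', x = a + c) →
      ∀ x0 ∈ A', φ x0 ≠ 0 → False := by
    intro A' B' nA' nB' hs x0 hx0 hφ0
    by_cases hB : ∃ y ∈ B', ¬ (φ y = 0 ∧ ψ y = 0)
    · obtain ⟨y, hy, hy0⟩ := hB
      have hy0' : φ y ≠ 0 ∨ ψ y ≠ 0 := by tauto
      have dA := hdimN A' nA' x0 hx0 (Or.inl hφ0)
      have dB := hdimN B' nB' y hy hy0'
      have hsup : A'.toSubmodule ⊔ B'.toSubmodule = ⊤ := by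
        rw [eq_top_iff]
        intro x _
        obtain ⟨a, ha, c, hc, rfl⟩ := hs x
        exact Submodule.add_mem_sup ha hc
      have hadd := Submodule.finrank_sup_add_finrank_inf_eq A'.toSubmodule B'.toSubmodule
      rw [hsup, finrank_top] at hadd
      omega
    · push_neg at hB
      obtain ⟨a1, ha1, b1, hb1, he1⟩ := hs e
      have hb1V : b1 ∈ V := hker b1 (hB b1 hb1).1 (hB b1 hb1).2
      have hφa1 : φ a1 = 0 := by
        have h1 : φ e = φ a1 + φ b1 := by rw [he1, map_add]
        rw [hφe, hφV b1 hb1V, add_zero] at h1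
        exact h1.symm
      have hψa1 : ψ a1 = 1 := by
        have h1 : ψ e = ψ a1 + ψ b1 := by rw [he1, map_add]
        rw [hψe, hψV b1 hb1V, add_zero] at h1
        exact h1.symm
      have hcomm := hlA A' nA' x0 hx0 a1 ha1
      rw [hψa1, hφa1, mul_one, zero_mul] at hcomm
      exact hφ0 hcomm
  obtain ⟨a0, ha0, b0, hb0, hh0⟩ := hsum h
  have hsum' : ∀ x : g, ∃ a ∈ B, ∃ c ∈ A, x = a + c := by
    intro x
    obtain ⟨a, ha, c, hc, hx⟩ := hsum x
    exact ⟨c, hc, a, ha, by rw [hx, add_comm]⟩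
  have hφsum : φ a0 + φ b0 = 1 := by
    have h1 := hφh
    rw [hh0, map_add] at h1
    exact h1
  by_cases hA0 : φ a0 = 0
  · have hB0 : φ b0 ≠ 0 := by
      intro hc
      rw [hA0, hc, add_zero] at hφsum
      exact zero_ne_one hφsum
    exact key B A nB nA hsum' b0 hb0 hB0
  · exact key A B nA nB hsum a0 ha0 hA0
end

section
/- Every supersolvable finite-dimensional Lie algebra L (i.e., one admitting a chain of ideals of L with one-dimensional quotients) over a field K of characteristic p > 0 has nilpotent derived subalgebra; hence L can be written as a sum of two nilpotent subalgebras. -/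
open Module LieAlgebra LieSubalgebra

-- endomorphisms of a 1-dim space commute
lemma endo_comm {K Q : Type*} [Field K] [AddCommGroup Q] [Module K Q]
    (h : finrank K Q = 1) (f g : Q →ₗ[K] Q) (w : Q) : f (g w) = g (f w) := by
  obtain ⟨v, -, hv⟩ := finrank_eq_one_iff'.mp h
  obtain ⟨cf, hcf⟩ := hv (f v)
  obtain ⟨cg, hcg⟩ := hv (g v)
  obtain ⟨c, rfl⟩ := hv w
  simp only [map_smul, ← hcf, ← hcg, smul_smul]
  ring_nf

lemma one_dim_quot {K L : Type*} [Field K] [LieRing L] [LieAlgebra K L] [FiniteDimensional K L]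
    (I J : LieIdeal K L) (hIJ : I ≤ J) (hd : finrank K J = finrank K I + 1)
    (a b z : L) (hz : z ∈ J) : ⁅⁅a, b⁆, z⁆ ∈ I := by
  set S : Submodule K J := I.toSubmodule.comap J.toSubmodule.subtype with hS
  have hmemS : ∀ y : J, y ∈ S ↔ (y : L) ∈ I := fun y => Iff.rfl
  have hQ : finrank K (J ⧸ S) = 1 := by
    have h1 := S.finrank_quotient_add_finrank
    have h2 : finrank K S = finrank K I :=
      (Submodule.comapSubtypeEquivOfLe hIJ).finrank_eq
    omega
  -- the endomorphism of J induced by ad c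
  have bm : ∀ (c : L) (y : J), ⁅c, (y : L)⁆ ∈ J := fun c y => J.lie_mem y.2
  let F : L → (J →ₗ[K] J) := fun c =>
    { toFun := fun y => ⟨⁅c, (y : L)⁆, bm c y⟩
      map_add' := by intro y z; ext; simp
      map_smul' := by intro t y; ext; simp }
  have hFS : ∀ c : L, S ≤ S.comap (F c) := by
    intro c y hy
    simpa [hmemS, F] using I.lie_mem ((hmemS y).mp hy)
  let G : L → ((J ⧸ S) →ₗ[K] (J ⧸ S)) := fun c => S.mapQ S (F c) (hFS c)
  have hG : ∀ (c : L) (y : J), G c (S.mkQ y) = S.mkQ (F c y) := fun c y =>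
    Submodule.mapQ_apply _ _ _ _
  set w : J := ⟨⁅⁅a, b⁆, z⁆, bm ⁅a,b⁆ ⟨z, hz⟩⟩ with hw
  have key : w = F a (F b ⟨z, hz⟩) - F b (F a ⟨z, hz⟩) := by
    ext
    simp [F, w, lie_lie]
  have : S.mkQ w = 0 := by
    rw [key, map_sub, ← hG, ← hG, ← hG, ← hG, endo_comm hQ (G a) (G b), sub_self]
  rw [← hmemS w]
  rw [Submodule.mkQ_apply, Submodule.Quotient.mk_eq_zero] at this; exact this

universe u v

lemma sum_lemma (K : Type u) [Field K] : ∀ (m : ℕ) (L : Type v) [LieRing L] [LieAlgebra K L]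
    [FiniteDimensional K L], finrank K L ≤ m →
    ∃ B : LieSubalgebra K L, LieRing.IsNilpotent B ∧
      ∀ x : L, ∃ b ∈ B, x - b ∈ LieAlgebra.derivedSeries K L 1 := by
  intro m
  induction m with
  | zero =>
    intro L _ _ _ hm
    have : Subsingleton L := by
      have := finrank_zero_iff (R := K) (M := L) |>.mp (Nat.le_zero.mp hm)
      infer_instance
    refine ⟨⊤, ?_, fun x => ⟨x, trivial, by simpa using (LieAlgebra.derivedSeries K L 1).zero_mem⟩⟩
    have : LieRing.IsNilpotent L := by
      constructor
      exact ⟨0, (LieSubmodule.eq_bot_iff _).mpr (fun x _ => Subsingleton.elim x 0)⟩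
    exact Function.Injective.lieAlgebra_isNilpotent (f := (⊤ : LieSubalgebra K L).incl)
      Subtype.val_injective
  | succ m ih =>
    intro L _ _ _ hm
    by_cases hnil : ∀ x : L, IsNilpotent (ad K L x)
    · have : LieRing.IsNilpotent L := LieAlgebra.isNilpotent_iff_forall.mpr hnil
      refine ⟨⊤, ?_, fun x => ⟨x, trivial, by simpa using (LieAlgebra.derivedSeries K L 1).zero_mem⟩⟩
      exact Function.Injective.lieAlgebra_isNilpotent (f := (⊤ : LieSubalgebra K L).incl)
        Subtype.val_injective
    · push_neg at hnil
      obtain ⟨x, hx⟩ := hnil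
      set N := finrank K L with hN
      set f : Module.End K L := (ad K L x) ^ N with hf
      -- kernels stabilize
      have hker : ∀ k : ℕ, LinearMap.ker ((ad K L x) ^ k) ≤ LinearMap.ker f :=
        fun k => by rw [hf, hN]; exact Module.End.ker_pow_le_ker_pow_finrank _ _
      have hker2 : LinearMap.ker ((ad K L x) ^ (N + N)) = LinearMap.ker f := by
        rcases Nat.eq_zero_or_pos N with h0 | h0
        · rw [hf, h0, Nat.add_zero]
        · rw [hf, hN]
          exact Module.End.ker_pow_eq_ker_pow_finrank_of_le (by omega)
      set E : LieSubalgebra K L := engel K x with hE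
      have hEker : ∀ y : L, y ∈ E ↔ y ∈ LinearMap.ker f := by
        intro y
        constructor
        · intro hy
          obtain ⟨k, hk⟩ := (mem_engel_iff K x y).mp hy
          exact hker k hk
        · intro hy
          exact (mem_engel_iff K x y).mpr ⟨N, hy⟩
      have hEtop : ¬ ∀ y : L, y ∈ E := by
        intro h
        apply hx
        refine ⟨N, ?_⟩
        ext y
        simpa using (hEker y).mp (h y)
      -- Fitting decomposition
      have hdisj : Disjoint (LinearMap.ker f) (LinearMap.range f) := by
        rw [disjoint_iff_inf_le]
        rintro y ⟨hy1, z, rfl⟩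
        have : z ∈ LinearMap.ker ((ad K L x) ^ (N + N)) := by
          rw [LinearMap.mem_ker, pow_add]
          exact hy1
        rw [hker2, LinearMap.mem_ker] at this
        simp [Submodule.mem_bot, this]
      have htop : LinearMap.ker f ⊔ LinearMap.range f = ⊤ := by
        apply Submodule.eq_top_of_disjoint
        · rw [add_comm]
          exact (LinearMap.finrank_range_add_finrank_ker f).ge
        · exact hdisj
      -- E is a proper subalgebra
      have hElt : finrank K E < N := by
        have : E.toSubmodule < ⊤ := by
          rcases lt_or_eq_of_le (le_top (a := E.toSubmodule)) with h | h
          · exact h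
          · exact absurd (fun y => by rw [show y ∈ E ↔ y ∈ E.toSubmodule from Iff.rfl, h]; trivial)
              hEtop
        exact Submodule.finrank_lt this.ne
      obtain ⟨B', hB'nil, hB'dec⟩ := ih E (by omega)
      have hinj : Function.Injective (E.incl.comp B'.incl) := by
        intro a b hab
        exact Subtype.ext (Subtype.ext hab)
      refine ⟨(E.incl.comp B'.incl).range, ?_, ?_⟩
      · haveI := hB'nil
        exact Function.Surjective.lieAlgebra_isNilpotent
          (f := ((E.incl.comp B'.incl).equivRangeOfInjective hinj).toLieHom)
          (LieEquiv.surjective _)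
      · intro y
        have hy : y ∈ LinearMap.ker f ⊔ LinearMap.range f := htop ▸ Submodule.mem_top
        obtain ⟨u, hu, v, hv, rfl⟩ := Submodule.mem_sup.mp hy
        obtain ⟨b', hb', hed⟩ := hB'dec ⟨u, (hEker u).mpr hu⟩
        refine ⟨(b' : L), LieHom.mem_range_self (f := E.incl.comp B'.incl) ⟨b', hb'⟩, ?_⟩
        have h1 : u - (b' : L) ∈ LieAlgebra.derivedSeries K L 1 := by
          have := LieIdeal.derivedSeries_map_le (f := E.incl) 1
          have hmem : E.incl ((⟨u, (hEker u).mpr hu⟩ : E) - b') ∈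
              (LieAlgebra.derivedSeries K E 1).map E.incl := LieIdeal.mem_map hed
          exact this hmem
        have h2 : v ∈ LieAlgebra.derivedSeries K L 1 := by
          obtain ⟨w, rfl⟩ := hv
          have hN1 : 0 < N := by
            rcases Nat.eq_zero_or_pos N with h0 | h0
            · exfalso
              have : Subsingleton L := by
                have := finrank_zero_iff (R := K) (M := L) |>.mp (hN ▸ h0.symm ▸ rfl)
                infer_instance
              exact hx ⟨0, by ext z; simp [Subsingleton.elim z 0]⟩
            · exact h0
          have : f w = ⁅x, ((ad K L x) ^ (N - 1)) w⁆ := by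
            conv_lhs => rw [hf, show N = (N - 1) + 1 by omega, pow_succ']
            rfl
          rw [this, show (1 : ℕ) = 0 + 1 from rfl, LieAlgebra.derivedSeries_def,
            LieAlgebra.derivedSeriesOfIdeal_succ, LieAlgebra.derivedSeriesOfIdeal_zero]
          exact LieSubmodule.lie_mem_lie (LieSubmodule.mem_top _) (LieSubmodule.mem_top _)
        have : u + v - (b' : L) = (u - (b' : L)) + v := by abel
        rw [this]
        exact add_mem h1 h2



/-- A supersolvable finite-dimensional Lie algebra over a field of characteristic `p > 0`
(one with a chain of ideals with one-dimensional quotients) has nilpotent derived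
subalgebra; hence it is a sum of two nilpotent subalgebras. -/
theorem supersolvable_derived_nilpotent_and_sum_of_two_nilpotent
    (K : Type*) [Field K] (p : ℕ) [CharP K p] (hp : 0 < p)
    (L : Type*) [LieRing L] [LieAlgebra K L] [FiniteDimensional K L]
    (n : ℕ) (hn : n = Module.finrank K L)
    (C : Fin (n + 1) → LieIdeal K L)
    (hmono : Monotone C)
    (h0 : C 0 = ⊥) (htop : C (Fin.last n) = ⊤)
    (hdim : ∀ k : Fin (n + 1), Module.finrank K (C k) = (k : ℕ)) :
    LieRing.IsNilpotent (LieAlgebra.derivedSeries K L 1) ∧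
    ∃ A B : LieSubalgebra K L, LieRing.IsNilpotent A ∧
      LieRing.IsNilpotent B ∧ (∀ x : L, ∃ a ∈ A, ∃ b ∈ B, x = a + b) := by
  have hbr : ∀ (k : ℕ) (hk : k < n) (a b z : L), z ∈ C ⟨k + 1, by omega⟩ →
      ⁅⁅a, b⁆, z⁆ ∈ C ⟨k, by omega⟩ := by
    intro k hk a b z hz
    refine one_dim_quot (C ⟨k, by omega⟩) (C ⟨k + 1, by omega⟩)
      (hmono (Fin.mk_le_mk.mpr (by omega))) ?_ a b z hz
    rw [hdim, hdim]
  have hDC : ∀ d ∈ LieAlgebra.derivedSeries K L 1, ∀ (k : ℕ) (hk : k < n),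
      ∀ z ∈ C ⟨k + 1, by omega⟩, ⁅d, z⁆ ∈ C ⟨k, by omega⟩ := by
    intro d hd k hk z hz
    have hd' : d ∈ Submodule.span K
        {m : L | ∃ x ∈ (⊤ : LieIdeal K L), ∃ y ∈ (⊤ : LieIdeal K L), ⁅x, y⁆ = m} := by
      rw [← LieSubmodule.lieIdeal_oper_eq_linear_span']
      rw [LieAlgebra.derivedSeries_def, LieAlgebra.derivedSeriesOfIdeal_succ,
        LieAlgebra.derivedSeriesOfIdeal_zero] at hd
      exact hd
    refine Submodule.span_induction ?_ ?_ ?_ ?_ hd'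
    · rintro m ⟨a, -, b, -, rfl⟩
      exact hbr k hk a b z hz
    · simp only [zero_lie]
      exact (C _).zero_mem
    · intro d₁ d₂ _ _ h1 h2
      rw [add_lie]
      exact add_mem h1 h2
    · intro t d₁ _ h1
      rw [smul_lie]
      exact Submodule.smul_mem _ _ h1
  have hpow : ∀ d ∈ LieAlgebra.derivedSeries K L 1, ∀ (k : ℕ) (hk : k ≤ n),
      ∀ z ∈ C ⟨k, by omega⟩, ((LieAlgebra.ad K L d) ^ k) z = 0 := by
    intro d hd k
    induction k with
    | zero =>
      intro hk z hz
      have : C ⟨0, by omega⟩ = ⊥ := h0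
      rw [this, LieSubmodule.mem_bot] at hz
      simpa using hz
    | succ k ih =>
      intro hk z hz
      rw [pow_succ]
      show ((LieAlgebra.ad K L d) ^ k) ⁅d, z⁆ = 0
      exact ih (by omega) _ (hDC d hd k (by omega) z hz)
  have hadL : ∀ d ∈ LieAlgebra.derivedSeries K L 1, ((LieAlgebra.ad K L d) ^ n) = 0 := by
    intro d hd
    ext z
    have hz : z ∈ C ⟨n, by omega⟩ := by
      have : C ⟨n, by omega⟩ = ⊤ := htop
      rw [this]
      exact LieSubmodule.mem_top z
    simpa using hpow d hd n le_rfl z hz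
  set D := LieAlgebra.derivedSeries K L 1 with hD
  have hcoe : ∀ (d : D) (j : ℕ) (x : D),
      ((((LieAlgebra.ad K (↥D) d) ^ j) x : D) : L) = ((LieAlgebra.ad K L (d : L)) ^ j) (x : L) := by
    intro d j
    induction j with
    | zero => intro x; rfl
    | succ j ih =>
      intro x
      rw [pow_succ, pow_succ]
      show ((((LieAlgebra.ad K (↥D) d) ^ j) ⁅d, x⁆ : D) : L) = _
      rw [ih ⁅d, x⁆]
      rfl
  have part1 : LieRing.IsNilpotent D := by
    rw [LieAlgebra.isNilpotent_iff_forall (R := K)]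
    intro d
    refine ⟨n, ?_⟩
    ext x
    have h2 : ((LieAlgebra.ad K L (d : L)) ^ n) (x : L) = 0 := by rw [hadL (d : L) d.2]; rfl
    simpa using (hcoe d n x).trans h2
  refine ⟨part1, ?_⟩
  obtain ⟨B, hBnil, hBdec⟩ := sum_lemma K (finrank K L) L le_rfl
  have hinj : Function.Injective D.incl := fun a b hab => Subtype.ext hab
  refine ⟨D.incl.range, B, ?_, hBnil, ?_⟩
  · haveI := part1
    exact Function.Surjective.lieAlgebra_isNilpotent
      (f := (D.incl.equivRangeOfInjective hinj).toLieHom) (LieEquiv.surjective _)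
  · intro x
    obtain ⟨b, hb, hxb⟩ := hBdec x
    exact ⟨x - b, LieHom.mem_range_self (f := D.incl) ⟨x - b, hxb⟩, b, hb, by abel⟩
end

section
/- The Zassenhaus algebra W₁(n) over an algebraically closed field of characteristic p > 5 cannot be written as a sum of two nilpotent Lie subalgebras. In particular, for n = 1, the Witt algebra W₁(1) = Der(K[x]/(x^p)) is not a sum of two nilpotent subalgebras. -/
/-- The Zassenhaus algebra `W₁(n)` over an algebraically closed field of characteristic
`p > 5` — presented by its basis `e₋₁, …, e_{pⁿ−2}` and structure constants
`⁅eᵢ, eⱼ⁆ = (C(i+j+1, j+1) − C(i+j+1, i+1)) e_{i+j}` — cannot be written as a sum of two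
nilpotent Lie subalgebras.  (For `n = 1` this is the Witt algebra `Der(K[x]/(x^p))`.) -/
theorem zassenhaus_not_sum_of_two_nilpotent
    (K : Type*) [Field K] [IsAlgClosed K] (p n : ℕ) (hp : p.Prime) (hp5 : 5 < p)
    [CharP K p] (hn : 1 ≤ n)
    (W : Type*) [LieRing W] [LieAlgebra K W] [FiniteDimensional K W]
    (e : ℤ → W)
    (hind : LinearIndependent K
      fun j : {j : ℤ // j ∈ Finset.Icc (-1 : ℤ) ((p : ℤ) ^ n - 2)} => e j.1)
    (hspan : Submodule.span K (e '' Set.Icc (-1 : ℤ) ((p : ℤ) ^ n - 2)) = ⊤)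
    (hbr : ∀ i ∈ Finset.Icc (-1 : ℤ) ((p : ℤ) ^ n - 2),
      ∀ j ∈ Finset.Icc (-1 : ℤ) ((p : ℤ) ^ n - 2),
      ⁅e i, e j⁆ =
        if i + j ∈ Finset.Icc (-1 : ℤ) ((p : ℤ) ^ n - 2) then
          (((Nat.choose (i + j + 1).toNat (j + 1).toNat : ℕ) : K) -
            ((Nat.choose (i + j + 1).toNat (i + 1).toNat : ℕ) : K)) • e (i + j)
        else 0) :
    ¬ ∃ A B : LieSubalgebra K W, LieRing.IsNilpotent A ∧
        LieRing.IsNilpotent B ∧ (∀ x : W, ∃ a ∈ A, ∃ b ∈ B, x = a + b) := by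
  classical
  rintro ⟨A, B, hA, hB, hsum⟩
  set I : Finset ℤ := Finset.Icc (-1 : ℤ) ((p : ℤ) ^ n - 2) with hI
  -- basic numerology
  have hp7 : 7 ≤ p := by
    have h6 : p ≠ 6 := by rintro rfl; norm_num at hp
    omega
  have hpn7 : (7 : ℤ) ≤ (p : ℤ) ^ n := by
    have h1 : p ≤ p ^ n := Nat.le_self_pow (by omega) p
    have : (7 : ℤ) ≤ ((p ^ n : ℕ) : ℤ) := by exact_mod_cast le_trans hp7 h1
    simpa using this
  have hm1I : (-1 : ℤ) ∈ I := by simp [hI, Finset.mem_Icc]; omega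
  have h0I : (0 : ℤ) ∈ I := by simp [hI, Finset.mem_Icc]; omega
  have h1I : (1 : ℤ) ∈ I := by simp [hI, Finset.mem_Icc]; omega
  -- the basis
  have hsp : ⊤ ≤ Submodule.span K (Set.range fun j : {j : ℤ // j ∈ I} => e j.1) := by
    rw [← hspan]
    apply Submodule.span_mono
    rintro _ ⟨i, hi, rfl⟩
    exact ⟨⟨i, by simpa [hI, Finset.mem_Icc] using hi⟩, rfl⟩
  set b : Module.Basis {j : ℤ // j ∈ I} K W := Module.Basis.mk hind hsp with hbdef
  have hbe : ∀ (i : ℤ) (hi : i ∈ I), b ⟨i, hi⟩ = e i := fun i hi => Module.Basis.mk_apply hind hsp ⟨i, hi⟩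
  -- coordinates
  set c : ℤ → W →ₗ[K] K := fun i => if h : i ∈ I then b.coord ⟨i, h⟩ else 0 with hcdef
  have hc : ∀ (i : ℤ) (h : i ∈ I) (x : W), c i x = b.repr x ⟨i, h⟩ := by
    intro i h x
    simp [hcdef, dif_pos h, Module.Basis.coord_apply]
  have hce : ∀ i ∈ I, ∀ j ∈ I, c i (e j) = if i = j then 1 else 0 := by
    intro i hi j hj
    rw [hc i hi, ← hbe j hj, b.repr_self, Finsupp.single_apply]
    by_cases h : i = j
    · subst h; simp
    · rw [if_neg h, if_neg]; intro h'; exact h (congrArg Subtype.val h').symm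
  have hxe : ∀ x : W, x = ∑ i ∈ I, c i x • e i := by
    intro x
    have h1 := b.sum_repr x
    rw [Finset.univ_eq_attach] at h1
    conv_lhs => rw [← h1]
    rw [← Finset.sum_attach I (fun i => c i x • e i)]
    refine Finset.sum_congr rfl fun i _ => ?_
    rcases i with ⟨i, hi⟩
    rw [hbe i hi, hc i hi]
  have hzero : ∀ x : W, (∀ i ∈ I, c i x = 0) → x = 0 := by
    intro x hx
    rw [hxe x]
    exact Finset.sum_eq_zero fun i hi => by rw [hx i hi, zero_smul]
  -- the structure-constant coefficient
  set co : ℤ → ℤ → K := fun i j =>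
    (((Nat.choose (i + j + 1).toNat (j + 1).toNat : ℕ) : K) -
      ((Nat.choose (i + j + 1).toNat (i + 1).toNat : ℕ) : K)) with hcodef
  -- bracket expansion
  have hbrk : ∀ (x y : W) (k : ℤ), k ∈ I →
      c k ⁅x, y⁆ = ∑ i ∈ I, (if k - i ∈ I then co i (k - i) * (c i x * c (k - i) y) else 0) := by
    intro x y k hk
    have hsuml : ∀ (s : Finset ℤ) (f : ℤ → W) (z : W), ⁅∑ i ∈ s, f i, z⁆ = ∑ i ∈ s, ⁅f i, z⁆ := by
      intro s f z
      induction s using Finset.cons_induction with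
      | empty => simp
      | cons a s ha ih => rw [Finset.sum_cons, Finset.sum_cons, add_lie, ih]
    have hsumr : ∀ (s : Finset ℤ) (f : ℤ → W) (z : W), ⁅z, ∑ i ∈ s, f i⁆ = ∑ i ∈ s, ⁅z, f i⁆ := by
      intro s f z
      induction s using Finset.cons_induction with
      | empty => simp
      | cons a s ha ih => rw [Finset.sum_cons, Finset.sum_cons, lie_add, ih]
    have step1 : ⁅x, y⁆ = ∑ i ∈ I, ∑ j ∈ I, (c i x * c j y) • ⁅e i, e j⁆ := by
      conv_lhs => rw [hxe x, hxe y]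
      rw [hsuml]
      refine Finset.sum_congr rfl fun i _ => ?_
      rw [hsumr]
      refine Finset.sum_congr rfl fun j _ => ?_
      rw [smul_lie, lie_smul, smul_smul]
    have step2 : c k ⁅x, y⁆ = ∑ i ∈ I, ∑ j ∈ I, (if i + j = k then co i j * (c i x * c j y) else 0) := by
      rw [step1, map_sum]
      refine Finset.sum_congr rfl fun i hi => ?_
      rw [map_sum]
      refine Finset.sum_congr rfl fun j hj => ?_
      rw [map_smul, hbr i hi j hj]
      by_cases h : i + j ∈ I
      · rw [if_pos h, map_smul, hce k hk (i + j) h]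
        by_cases h2 : i + j = k
        · rw [if_pos h2, if_pos h2.symm]; simp only [smul_eq_mul, mul_one]; ring
        · rw [if_neg h2, if_neg (fun h3 => h2 h3.symm)]; simp
      · rw [if_neg h, if_neg (fun h2 : i + j = k => h (h2 ▸ hk))]
        simp
    rw [step2]
    refine Finset.sum_congr rfl fun i _ => ?_
    have hcond : ∀ j : ℤ, (i + j = k) = (j = k - i) := fun j => by
      apply propext; omega
    calc ∑ j ∈ I, (if i + j = k then co i j * (c i x * c j y) else 0)
        = ∑ j ∈ I, (if j = k - i then co i j * (c i x * c j y) else 0) := by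
          exact Finset.sum_congr rfl fun j _ => if_congr (by omega) rfl rfl
      _ = if k - i ∈ I then co i (k - i) * (c i x * c (k - i) y) else 0 :=
          Finset.sum_ite_eq' I (k - i) _
  -- F2 : the (-1)-component of a bracket
  have F2 : ∀ x y : W, c (-1) ⁅x, y⁆ = c 0 x * c (-1) y - c (-1) x * c 0 y := by
    intro x y
    rw [hbrk x y (-1) hm1I]
    have hsub : ({-1, 0} : Finset ℤ) ⊆ I := by
      intro i hi
      simp only [Finset.mem_insert, Finset.mem_singleton] at hi
      rcases hi with rfl | rfl
      exacts [hm1I, h0I]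
    rw [← Finset.sum_subset hsub]
    · rw [Finset.sum_pair (by norm_num : (-1 : ℤ) ≠ 0)]
      have hco1 : co (-1) 0 = -1 := by
        simp [hcodef]
      have hco2 : co 0 (-1) = 1 := by
        simp [hcodef]
      rw [if_pos (by simpa using h0I), if_pos (by simpa using hm1I)]
      norm_num [hco1, hco2]
      ring
    · intro i hiI hine
      simp only [Finset.mem_insert, Finset.mem_singleton, not_or] at hine
      rw [if_neg]
      intro hmem
      rw [hI] at hiI hmem
      simp only [Finset.mem_Icc] at hiI hmem
      omega
  -- F1 : lowering the lowest index by bracketing with a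
  have F1a : ∀ (a x : W) (m : ℤ), m ∈ I → 0 < m → (∀ j ∈ I, j < m → c j x = 0) →
      c (m - 1) ⁅a, x⁆ = -(c (-1) a * c m x) := by
    intro a x m hmI hm hv
    have hm1 : m - 1 ∈ I := by rw [hI] at hmI ⊢; simp only [Finset.mem_Icc] at hmI ⊢; omega
    rw [hbrk a x (m - 1) hm1]
    rw [Finset.sum_eq_single (-1 : ℤ)]
    · rw [if_pos (by simpa using hmI)]
      have : co (-1) m = -1 := by
        have h1 : ((-1 : ℤ) + m + 1).toNat = m.toNat := by omega
        have h2 : (m + 1).toNat = m.toNat + 1 := by omega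
        have h3 : ((-1 : ℤ) + 1).toNat = 0 := by norm_num
        rw [hcodef]
        simp only [h1, h2, h3]
        rw [Nat.choose_eq_zero_of_lt (by omega), Nat.choose_zero_right]
        simp
      have h4 : m - 1 - (-1) = m := by ring
      rw [h4, this]
      ring
    · intro i hiI hne
      by_cases hmem : m - 1 - i ∈ I
      · rw [if_pos hmem]
        have hi1 : -1 ≤ i := by rw [hI] at hiI; simp only [Finset.mem_Icc] at hiI; exact hiI.1
        have : m - 1 - i < m := by omega
        rw [hv (m - 1 - i) hmem this, mul_zero, mul_zero]
      · rw [if_neg hmem]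
    · intro h; exact absurd hm1I h
  have F1b : ∀ (a x : W) (m : ℤ), (∀ j ∈ I, j < m → c j x = 0) →
      ∀ k ∈ I, k < m - 1 → c k ⁅a, x⁆ = 0 := by
    intro a x m hv k hk hkm
    rw [hbrk a x k hk]
    refine Finset.sum_eq_zero fun i hiI => ?_
    by_cases hmem : k - i ∈ I
    · rw [if_pos hmem]
      have hi1 : -1 ≤ i := by rw [hI] at hiI; simp only [Finset.mem_Icc] at hiI; exact hiI.1
      have : k - i < m := by omega
      rw [hv (k - i) hmem this, mul_zero, mul_zero]
    · rw [if_neg hmem]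
  -- Key lemma: a nilpotent subalgebra containing an element with nonzero (-1)-coordinate
  -- contains no nonzero element with zero (-1)-coordinate.
  have keyKL : ∀ (M : LieSubalgebra K W), LieRing.IsNilpotent M →
      ∀ a ∈ M, c (-1) a ≠ 0 → ∀ x ∈ M, c (-1) x = 0 → x = 0 := by
    intro M hM a haM hca x hxM hcx
    by_contra hx0
    -- climb down to a lowest-index-0 element
    have climb : ∀ t : ℕ, ∀ y : W, y ∈ M → ((t : ℤ) ∈ I) → c (t : ℤ) y ≠ 0 →
        (∀ j ∈ I, j < (t : ℤ) → c j y = 0) →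
        ∃ w, w ∈ M ∧ c (-1) w = 0 ∧ c 0 w ≠ 0 := by
      intro t
      induction t with
      | zero =>
        intro y hy _ h0 hv
        exact ⟨y, hy, hv (-1) hm1I (by norm_num), by exact_mod_cast h0⟩
      | succ t ih =>
        intro y hy htI h0 hv
        have htI' : ((t : ℕ) : ℤ) ∈ I := by
          rw [hI] at htI ⊢; simp only [Finset.mem_Icc] at htI ⊢; push_cast at htI ⊢; omega
        have hmpos : (0 : ℤ) < ((t : ℕ) : ℤ) + 1 := by positivity
        have hcompute : c (t : ℤ) ⁅a, y⁆ = -(c (-1) a * c ((t : ℤ) + 1) y) := by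
          have := F1a a y ((t : ℤ) + 1) (by exact_mod_cast htI) hmpos
            (fun j hj hjlt => hv j hj (by push_cast; omega))
          simpa using this
        refine ih ⁅a, y⁆ (M.lie_mem haM hy) htI' ?_ ?_
        · rw [hcompute]
          have : c (((t : ℕ) : ℤ) + 1) y ≠ 0 := by push_cast at h0 ⊢; exact_mod_cast h0
          exact neg_ne_zero.mpr (mul_ne_zero hca this)
        · intro j hj hjt
          exact F1b a y ((t : ℤ) + 1) (fun j' hj' hj't => hv j' hj' (by push_cast; omega))
            j hj (by omega)
    -- find the lowest index of x
    set T : Finset ℤ := I.filter (fun i => c i x ≠ 0) with hT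
    have hTne : T.Nonempty := by
      by_contra hTe
      apply hx0
      apply hzero
      intro i hi
      by_contra hne
      exact hTe ⟨i, Finset.mem_filter.mpr ⟨hi, hne⟩⟩
    set m : ℤ := T.min' hTne with hmdef
    have hmT : m ∈ T := T.min'_mem hTne
    have hmI : m ∈ I := (Finset.mem_filter.mp hmT).1
    have hmc : c m x ≠ 0 := (Finset.mem_filter.mp hmT).2
    have hmlow : ∀ j ∈ I, j < m → c j x = 0 := by
      intro j hj hjm
      by_contra hne
      exact absurd (T.min'_le j (Finset.mem_filter.mpr ⟨hj, hne⟩)) (by omega)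
    have hm0 : 0 ≤ m := by
      rcases lt_or_ge m 0 with h | h
      · exfalso
        have : -1 ≤ m := by rw [hI] at hmI; simp only [Finset.mem_Icc] at hmI; exact hmI.1
        have hm1 : m = -1 := by omega
        rw [hm1] at hmc
        exact hmc hcx
      · exact h
    obtain ⟨w, hwM, hw1, hw0⟩ :=
      climb m.toNat x hxM (by rwa [Int.toNat_of_nonneg hm0])
        (by rwa [Int.toNat_of_nonneg hm0]) (by rw [Int.toNat_of_nonneg hm0]; exact hmlow)
    -- now derive non-nilpotency
    haveI : LieModule.IsNilpotent (↥M) (↥M) := hM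
    have hch : ∀ k : ℕ,
        c (-1) (((((LieModule.toEnd K (↥M) (↥M)) ⟨w, hwM⟩) ^ k) ⟨a, haM⟩ : ↥M) : W) =
          (c 0 w) ^ k * c (-1) a := by
      intro k
      induction k with
      | zero => simp
      | succ k ih =>
        rw [pow_succ', Module.End.mul_apply, LieModule.toEnd_apply_apply]
        rw [LieSubalgebra.coe_bracket, F2]
        rw [ih, hw1]
        ring
    obtain ⟨k, hk⟩ := LieModule.isNilpotent_toEnd_of_isNilpotent K (↥M) (↥M) ⟨w, hwM⟩
    have := hch k
    rw [hk] at this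
    simp only [LinearMap.zero_apply, ZeroMemClass.coe_zero, map_zero] at this
    exact (mul_ne_zero (pow_ne_zero k hw0) hca) this.symm
  -- the main symmetric argument
  have main : ∀ A' B' : LieSubalgebra K W, LieRing.IsNilpotent A' →
      LieRing.IsNilpotent B' → (∀ x : W, ∃ a ∈ A', ∃ b ∈ B', x = a + b) →
      ∀ a₀ ∈ A', c (-1) a₀ ≠ 0 → False := by
    intro A' B' hA' hB' hsum' a₀ ha₀ hca₀
    have hA2 : ∀ x ∈ A', c (-1) x = 0 → x = 0 := keyKL A' hA' a₀ ha₀ hca₀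
    by_cases hBex : ∃ b₀ ∈ B', c (-1) b₀ ≠ 0
    · obtain ⟨b₀, hb₀, hcb₀⟩ := hBex
      have hB2 : ∀ x ∈ B', c (-1) x = 0 → x = 0 := keyKL B' hB' b₀ hb₀ hcb₀
      -- every element of A' is a multiple of a₀, similarly B'
      have hline : ∀ (M : LieSubalgebra K W) (u : W), u ∈ M → c (-1) u ≠ 0 →
          (∀ x ∈ M, c (-1) x = 0 → x = 0) → ∀ x ∈ M, ∃ α : K, x = α • u := by
        intro M u huM hcu h2 x hxM
        refine ⟨c (-1) x / c (-1) u, ?_⟩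
        have hmem : c (-1) u • x - c (-1) x • u ∈ M := by
          exact M.sub_mem (M.smul_mem _ hxM) (M.smul_mem _ huM)
        have hcc : c (-1) (c (-1) u • x - c (-1) x • u) = 0 := by
          simp only [map_sub, map_smul, smul_eq_mul]
          ring
        have h0 := h2 _ hmem hcc
        have h1 : c (-1) u • x = c (-1) x • u := by
          have := sub_eq_zero.mp h0; exact this
        rw [div_eq_mul_inv, mul_comm, ← smul_smul]
        rw [← h1, smul_smul, inv_mul_cancel₀ hcu, one_smul]
      have hspan2 : (⊤ : Submodule K W) ≤ Submodule.span K ({a₀, b₀} : Set W) := by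
        intro x _
        obtain ⟨a, haA, bb, hbB, rfl⟩ := hsum' x
        obtain ⟨α, rfl⟩ := hline A' a₀ ha₀ hca₀ hA2 a haA
        obtain ⟨β, rfl⟩ := hline B' b₀ hb₀ hcb₀ hB2 bb hbB
        exact Submodule.add_mem _
          (Submodule.smul_mem _ _ (Submodule.subset_span (by simp)))
          (Submodule.smul_mem _ _ (Submodule.subset_span (by simp)))
      -- dimension contradiction
      have hfr : Module.finrank K W = p ^ n := by
        rw [Module.finrank_eq_card_basis b, Fintype.card_coe, hI, Int.card_Icc]
        have : ((p : ℤ) ^ n - 2 + 1 - -1) = ((p ^ n : ℕ) : ℤ) := by push_cast; ring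
        rw [this, Int.toNat_natCast]
      have hle2 : Module.finrank K W ≤ 2 := by
        have h3 : Submodule.span K ({a₀, b₀} : Set W) = ⊤ := eq_top_iff.mpr hspan2
        have h4 := finrank_span_le_card (R := K) ({a₀, b₀} : Set W)
        rw [h3, finrank_top] at h4
        refine le_trans h4 ?_
        have : ({a₀, b₀} : Set W).toFinset ⊆ {a₀, b₀} := by
          intro z hz; simpa using hz
        calc ({a₀, b₀} : Set W).toFinset.card ≤ ({a₀, b₀} : Finset W).card :=
              Finset.card_le_card this
          _ ≤ 2 := Finset.card_insert_le _ _ |>.trans (by simp)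
      have : (p : ℕ) ^ n ≤ 2 := hfr ▸ hle2
      have hpn7' : 7 ≤ p ^ n := by exact_mod_cast (by push_cast at hpn7 ⊢; omega : (7:ℤ) ≤ ((p^n : ℕ) : ℤ))
      omega
    · push_neg at hBex
      -- B' is inside ker c₋₁, so e 0 and e 1 must lie in B'
      have hmem01 : ∀ i : ℤ, i ∈ I → i ≠ -1 → e i ∈ B' := by
        intro i hiI hine
        obtain ⟨a, haA, bb, hbB, hxab⟩ := hsum' (e i)
        have h1 : c (-1) (e i) = 0 := by
          rw [hce (-1) hm1I i hiI, if_neg (fun h => hine h.symm)]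
        have h2 : c (-1) a = 0 := by
          have := congrArg (c (-1)) hxab
          rw [h1, map_add, hBex bb hbB, add_zero] at this
          exact this.symm
        have h3 := hA2 a haA h2
        rw [h3, zero_add] at hxab
        rwa [hxab]
      have he0 : e 0 ∈ B' := hmem01 0 h0I (by norm_num)
      have he1 : e 1 ∈ B' := hmem01 1 h1I (by norm_num)
      -- bracket relation ⁅e 0, e 1⁆ = (-1) • e 1
      have hbr01 : ⁅e (0 : ℤ), e 1⁆ = (-1 : K) • e 1 := by
        have heq := hbr 0 h0I 1 h1I
        have h2 : ((0:ℤ) + 1 + 1).toNat = 2 := by omega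
        have h3 : ((1:ℤ) + 1).toNat = 2 := by omega
        have h4 : ((0:ℤ) + 1).toNat = 1 := by omega
        have h5 : (0:ℤ) + 1 ∈ I := by simpa using h1I
        rw [heq, if_pos h5, h2, h3, h4]
        have h6 : e ((0:ℤ) + 1) = e 1 := by norm_num
        rw [h6]
        have h7 : ((Nat.choose 2 2 : ℕ) : K) - ((Nat.choose 2 1 : ℕ) : K) = -1 := by
          norm_num [Nat.choose]
        rw [h7]
      -- chain in B'
      haveI : LieModule.IsNilpotent (↥B') (↥B') := hB'
      have hch : ∀ k : ℕ,
          (((((LieModule.toEnd K (↥B') (↥B')) ⟨e 0, he0⟩) ^ k) ⟨e 1, he1⟩ : ↥B') : W) =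
            ((-1 : K) ^ k) • e 1 := by
        intro k
        induction k with
        | zero => simp
        | succ k ih =>
          rw [pow_succ', Module.End.mul_apply, LieModule.toEnd_apply_apply]
          rw [LieSubalgebra.coe_bracket, ih, lie_smul, hbr01, smul_smul]
          rw [pow_succ]
      obtain ⟨k, hk⟩ := LieModule.isNilpotent_toEnd_of_isNilpotent K (↥B') (↥B') ⟨e 0, he0⟩
      have := hch k
      rw [hk] at this
      simp only [LinearMap.zero_apply, ZeroMemClass.coe_zero] at this
      have he1ne : e 1 ≠ 0 := by
        have := hind.ne_zero ⟨1, h1I⟩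
        simpa using this
      have : e 1 = 0 := by
        have hne : ((-1 : K) ^ k) ≠ 0 := pow_ne_zero _ (by norm_num)
        have := this.symm
        rwa [smul_eq_zero, or_iff_right hne] at this
      exact he1ne this
  -- conclude
  obtain ⟨a, haA, bb, hbB, hab⟩ := hsum (e (-1))
  have h1 : c (-1) (e (-1)) = 1 := by rw [hce (-1) hm1I (-1) hm1I, if_pos rfl]
  have : c (-1) a ≠ 0 ∨ c (-1) bb ≠ 0 := by
    by_contra hcon
    push_neg at hcon
    have := congrArg (c (-1)) hab
    rw [h1, map_add, hcon.1, hcon.2] at this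
    norm_num at this
  rcases this with h | h
  · exact main A B hA hB hsum a haA h
  · refine main B A hB hA (fun x => ?_) bb hbB h
    obtain ⟨a', ha', b', hb', hx⟩ := hsum x
    exact ⟨b', hb', a', ha', by rw [hx, add_comm]⟩
end
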